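/- arXiv:2003.09619 — 5 statements merged into one kernel-verified Lean document; each statement's English description precedes it below -/
import Mathlib

section
/- Let H be a real Hilbert space, K ⊆ H a nonempty closed convex set with metric projection π : H → H, and 𝔸 : H → H a bounded symmetric coercive linear operator with coercivity constant γ > 0. Let λ > 0, T > 0, and for i = 1, 2 let wᵢ ∈ L²(0,T;H) and let σᵢ : [0,T] → H be an H¹(0,T;H)-curve with derivative σᵢ' such that σ₁(0) = σ₂(0) and, for almost every t ∈ (0,T), 𝔸σᵢ'(t) + λ⁻¹(σᵢ(t) − π(σᵢ(t))) = wᵢ(t). Then for every t ∈ [0,T]: ‖σ₁(t) − σ₂(t)‖ ≤ (2/γ) ∫₀ᵀ ‖w₁(s) − w₂(s)‖ ds. -/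
open RealInnerProductSpace MeasureTheory

/-- `σ : [0,T] → H` is an `H¹(0,T;H)`-curve with derivative `σ'`: the derivative is
Bochner measurable and square integrable on `(0,T)`, and
`σ(t) = σ(0) + ∫₀ᵗ σ'(s) ds` for all `t ∈ [0,T]`. -/
def IsH1Curve {H : Type*} [NormedAddCommGroup H] [NormedSpace ℝ H] [CompleteSpace H]
    (T : ℝ) (σ σ' : ℝ → H) : Prop :=
  MemLp σ' 2 (volume.restrict (Set.Ioo 0 T)) ∧
    ∀ t ∈ Set.Icc 0 T, σ t = σ 0 + ∫ s in (0:ℝ)..t, σ' s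

section Aux

variable {H : Type*} [NormedAddCommGroup H] [InnerProductSpace ℝ H] [CompleteSpace H]

lemma inner_integral_right' {α : Type*} [MeasurableSpace α] {μ : Measure α} (c : H) {f : α → H}
    (hf : Integrable f μ) : ∫ x, ⟪c, f x⟫ ∂μ = ⟪c, ∫ x, f x ∂μ⟫ := by
  simpa using (innerSL ℝ c).integral_comp_comm hf

/-- Monotonicity of `x ↦ x - π x` for a map `π` satisfying the variational
characterization of the metric projection. -/
lemma proj_mono' (π : H → H) (K : Set H) (hπK : ∀ x, π x ∈ K)
    (hπ : ∀ x, ∀ k ∈ K, ⟪x - π x, k - π x⟫ ≤ 0) (x y : H) :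
    0 ≤ ⟪(x - π x) - (y - π y), x - y⟫ := by
  have h1 : ⟪x - π x, π y - π x⟫ ≤ 0 := hπ x (π y) (hπK y)
  have h2 : ⟪y - π y, π x - π y⟫ ≤ 0 := hπ y (π x) (hπK x)
  have key : ⟪(x - π x) - (y - π y), x - y⟫
      = ‖(x - π x) - (y - π y)‖ ^ 2 - ⟪x - π x, π y - π x⟫ - ⟪y - π y, π x - π y⟫ := by
    have hxy : x - y = ((x - π x) - (y - π y)) + (π x - π y) := by abel
    rw [hxy, inner_add_right, real_inner_self_eq_norm_sq, inner_sub_left]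
    have h3 : ⟪x - π x, π x - π y⟫ = -⟪x - π x, π y - π x⟫ := by
      rw [← inner_neg_right]
      congr 1
      abel
    rw [h3]
    ring
  nlinarith [sq_nonneg ‖(x - π x) - (y - π y)‖]

/-- Key quadratic identity, proved by symmetrization and Fubini:
`⟪A ∫₀ᵗ g, ∫₀ᵗ g⟫ = 2 ∫₀ᵗ ⟪A g(s), ∫₀ˢ g⟫ ds`. -/
lemma key_identity' (A : H →L[ℝ] H) (hAsym : ∀ x y, ⟪A x, y⟫ = ⟪x, A y⟫)
    (t : ℝ) (g : ℝ → H) (hg : IntegrableOn g (Set.Ioc 0 t)) :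
    ⟪A (∫ u in Set.Ioc 0 t, g u), ∫ u in Set.Ioc 0 t, g u⟫
      = 2 * ∫ s in Set.Ioc 0 t, ⟪A (g s), ∫ u in Set.Ioc 0 s, g u⟫ := by
  set μ := volume.restrict (Set.Ioc 0 t) with hμ
  have hsymm : ∀ x y : H, ⟪A x, y⟫ = ⟪A y, x⟫ := fun x y => by
    rw [hAsym, real_inner_comm]
  set F : ℝ × ℝ → ℝ := fun p => ⟪A (g p.1), g p.2⟫ with hF
  have hgm : AEStronglyMeasurable g μ := hg.aestronglyMeasurable
  have hFm : AEStronglyMeasurable F (μ.prod μ) :=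
    ((A.continuous.comp_aestronglyMeasurable hgm.comp_fst)).inner hgm.comp_snd
  have hFint : Integrable F (μ.prod μ) := by
    refine ((hg.norm.const_mul ‖A‖).mul_prod hg.norm).mono' hFm ?_
    refine Filter.Eventually.of_forall fun p => ?_
    calc ‖⟪A (g p.1), g p.2⟫‖ ≤ ‖A (g p.1)‖ * ‖g p.2‖ := norm_inner_le_norm _ _
      _ ≤ (‖A‖ * ‖g p.1‖) * ‖g p.2‖ :=
        mul_le_mul_of_nonneg_right (A.le_opNorm _) (norm_nonneg _)
  have hS : MeasurableSet {p : ℝ × ℝ | p.1 ≤ p.2} :=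
    measurableSet_le measurable_fst measurable_snd
  set J := ∫ u in Set.Ioc 0 t, g u with hJ
  have hA : ∫ p, F p ∂(μ.prod μ) = ⟪A J, J⟫ := by
    rw [integral_prod _ hFint]
    have h1 : ∀ s : ℝ, ∫ u, F (s, u) ∂μ = ⟪A (g s), J⟫ := fun s =>
      inner_integral_right' (A (g s)) hg
    calc ∫ s, (∫ u, F (s, u) ∂μ) ∂μ = ∫ s, ⟪A J, g s⟫ ∂μ := by
          refine integral_congr_ae (Filter.Eventually.of_forall fun s => ?_)
          dsimp only
          rw [h1 s, hsymm]
      _ = ⟪A J, J⟫ := inner_integral_right' (A J) hg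
  have hB : ∫ p in {p : ℝ × ℝ | p.1 ≤ p.2}ᶜ, F p ∂(μ.prod μ)
      = ∫ s in Set.Ioc 0 t, ⟪A (g s), ∫ u in Set.Ioc 0 s, g u⟫ := by
    rw [← integral_indicator hS.compl, integral_prod _ (hFint.indicator hS.compl)]
    refine integral_congr_ae ?_
    filter_upwards [ae_restrict_mem measurableSet_Ioc] with s hs
    have h1 : (fun u => Set.indicator {p : ℝ × ℝ | p.1 ≤ p.2}ᶜ F (s, u))
        = Set.indicator (Set.Iio s) (fun u => F (s, u)) := by
      funext u
      simp [Set.indicator_apply, not_le]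
    rw [h1, integral_indicator measurableSet_Iio, hμ,
      Measure.restrict_restrict measurableSet_Iio]
    have h2 : Set.Iio s ∩ Set.Ioc 0 t = Set.Ioo 0 s := by
      ext u
      constructor
      · rintro ⟨h3, h4, h5⟩; exact ⟨h4, h3⟩
      · rintro ⟨h4, h3⟩; exact ⟨h3, h4, h3.le.trans hs.2⟩
    rw [h2, Measure.restrict_congr_set Ioo_ae_eq_Ioc]
    exact inner_integral_right' (A (g s)) (hg.mono_set (Set.Ioc_subset_Ioc_right hs.2))
  have hD : MeasurableSet {p : ℝ × ℝ | p.1 = p.2} :=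
    (isClosed_eq continuous_fst continuous_snd).measurableSet
  have hdiag : (μ.prod μ) {p : ℝ × ℝ | p.1 = p.2} = 0 := by
    rw [Measure.prod_apply hD]
    have h0 : ∀ s : ℝ, μ (Prod.mk s ⁻¹' {p : ℝ × ℝ | p.1 = p.2}) = 0 := by
      intro s
      have he : (Prod.mk s ⁻¹' {p : ℝ × ℝ | p.1 = p.2}) = {s} := by ext u; simp [eq_comm]
      rw [he]
      exact measure_singleton s
    rw [lintegral_congr h0, lintegral_zero]
  have hndiag : ∀ᵐ p ∂(μ.prod μ), ¬ p.1 = p.2 := by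
    rw [ae_iff]; simpa using hdiag
  have hS' : MeasurableSet {p : ℝ × ℝ | p.2 ≤ p.1} :=
    measurableSet_le measurable_snd measurable_fst
  have hae : {p : ℝ × ℝ | p.2 ≤ p.1} =ᵐ[μ.prod μ] {p : ℝ × ℝ | p.1 ≤ p.2}ᶜ := by
    refine Filter.eventuallyEq_set.2 ?_
    filter_upwards [hndiag] with p hp
    exact ⟨fun h h2 => hp (le_antisymm h2 h), fun h => le_of_lt (not_le.1 h)⟩
  have hC : ∫ p in {p : ℝ × ℝ | p.1 ≤ p.2}, F p ∂(μ.prod μ)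
      = ∫ p in {p : ℝ × ℝ | p.1 ≤ p.2}ᶜ, F p ∂(μ.prod μ) := by
    rw [← integral_indicator hS]
    rw [← integral_prod_swap (fun z => Set.indicator {p : ℝ × ℝ | p.1 ≤ p.2} F z)]
    have h1 : (fun z : ℝ × ℝ => Set.indicator {p : ℝ × ℝ | p.1 ≤ p.2} F z.swap)
        = Set.indicator {p : ℝ × ℝ | p.2 ≤ p.1} F := by
      funext z
      have hFz : F z.swap = F z := hsymm (g z.2) (g z.1)
      simp only [Set.indicator_apply, Set.mem_setOf_eq, Prod.fst_swap, Prod.snd_swap, hFz]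
    rw [h1, integral_indicator hS']
    exact setIntegral_congr_set hae
  have hsplit := integral_add_compl hS hFint
  rw [hA, hC, hB] at hsplit
  show (⟪A J, J⟫ : ℝ) = 2 * ∫ s in Set.Ioc 0 t, ⟪A (g s), ∫ u in Set.Ioc 0 s, g u⟫
  rw [← hsplit]
  ring

end Aux
/-- Stability estimate for the Yosida-regularized flow rule
`𝔸σ̇ᵢ + λ⁻¹(σᵢ − π(σᵢ)) = wᵢ`: two solutions with equal initial values satisfy
`‖σ₁(t) − σ₂(t)‖ ≤ (2/γ) ∫₀ᵀ ‖w₁ − w₂‖ ds` for every `t ∈ [0,T]`. -/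
theorem yosida_flow_rule_stability
    {H : Type*} [NormedAddCommGroup H] [InnerProductSpace ℝ H] [CompleteSpace H]
    (K : Set H) (hK : K.Nonempty) (hKclosed : IsClosed K) (hKconv : Convex ℝ K)
    (π : H → H) (hπK : ∀ x, π x ∈ K)
    (hπ : ∀ x, ∀ k ∈ K, ⟪x - π x, k - π x⟫ ≤ 0)
    (A : H →L[ℝ] H) (hAsym : ∀ x y, ⟪A x, y⟫ = ⟪x, A y⟫)
    (γ : ℝ) (hγ : 0 < γ) (hAcoer : ∀ h : H, γ * ‖h‖ ^ 2 ≤ ⟪A h, h⟫)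
    (lam T : ℝ) (hlam : 0 < lam) (hT : 0 < T)
    (w₁ w₂ : ℝ → H)
    (hw₁ : MemLp w₁ 2 (volume.restrict (Set.Ioo 0 T)))
    (hw₂ : MemLp w₂ 2 (volume.restrict (Set.Ioo 0 T)))
    (σ₁ σ₂ σ₁' σ₂' : ℝ → H)
    (hσ₁ : IsH1Curve T σ₁ σ₁') (hσ₂ : IsH1Curve T σ₂ σ₂')
    (hinit : σ₁ 0 = σ₂ 0)
    (heq₁ : ∀ᵐ t ∂(volume.restrict (Set.Ioo 0 T)),
      A (σ₁' t) + lam⁻¹ • (σ₁ t - π (σ₁ t)) = w₁ t)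
    (heq₂ : ∀ᵐ t ∂(volume.restrict (Set.Ioo 0 T)),
      A (σ₂' t) + lam⁻¹ • (σ₂ t - π (σ₂ t)) = w₂ t) :
    ∀ t ∈ Set.Icc 0 T,
      ‖σ₁ t - σ₂ t‖ ≤ (2 / γ) * ∫ s in (0:ℝ)..T, ‖w₁ s - w₂ s‖ := by
  haveI hfin : IsFiniteMeasure (volume.restrict (Set.Ioo 0 T)) :=
    ⟨by rw [Measure.restrict_apply_univ, Real.volume_Ioo]; exact ENNReal.ofReal_lt_top⟩
  have hres : volume.restrict (Set.Ioo 0 T) = volume.restrict (Set.Ioc 0 T) :=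
    Measure.restrict_congr_set Ioo_ae_eq_Ioc
  set g : ℝ → H := fun s => σ₁' s - σ₂' s with hg_def
  have hgT : IntegrableOn g (Set.Ioc 0 T) volume := by
    rw [IntegrableOn, ← hres]
    exact memLp_one_iff_integrable.1
      ((hσ₁.1.sub hσ₂.1).mono_exponent (by norm_num))
  have hσ₁T : IntegrableOn σ₁' (Set.Ioc 0 T) volume := by
    rw [IntegrableOn, ← hres]
    exact memLp_one_iff_integrable.1 (hσ₁.1.mono_exponent (by norm_num))
  have hσ₂T : IntegrableOn σ₂' (Set.Ioc 0 T) volume := by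
    rw [IntegrableOn, ← hres]
    exact memLp_one_iff_integrable.1 (hσ₂.1.mono_exponent (by norm_num))
  have hΔwT : IntegrableOn (fun s => w₁ s - w₂ s) (Set.Ioc 0 T) volume := by
    rw [IntegrableOn, ← hres]
    exact memLp_one_iff_integrable.1
      ((hw₁.sub hw₂).mono_exponent (by norm_num))
  set C : ℝ := ∫ s in Set.Ioc 0 T, ‖w₁ s - w₂ s‖ with hC_def
  have hC0 : 0 ≤ C := integral_nonneg fun s => norm_nonneg _
  set I : ℝ → H := fun s => ∫ u in Set.Ioc 0 s, g u with hI_def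
  -- the difference of the curves is the primitive of `g`
  have hρ : ∀ s ∈ Set.Icc (0:ℝ) T, σ₁ s - σ₂ s = I s := by
    intro s hs
    have h1 : IntervalIntegrable σ₁' volume 0 s :=
      (intervalIntegrable_iff_integrableOn_Ioc_of_le hs.1).2
        (hσ₁T.mono_set (Set.Ioc_subset_Ioc_right hs.2))
    have h2 : IntervalIntegrable σ₂' volume 0 s :=
      (intervalIntegrable_iff_integrableOn_Ioc_of_le hs.1).2
        (hσ₂T.mono_set (Set.Ioc_subset_Ioc_right hs.2))
    rw [hσ₁.2 s hs, hσ₂.2 s hs, hinit]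
    calc σ₂ 0 + (∫ u in (0:ℝ)..s, σ₁' u) - (σ₂ 0 + ∫ u in (0:ℝ)..s, σ₂' u)
        = (∫ u in (0:ℝ)..s, σ₁' u) - ∫ u in (0:ℝ)..s, σ₂' u := by abel
      _ = ∫ u in (0:ℝ)..s, g u := (intervalIntegral.integral_sub h1 h2).symm
      _ = I s := intervalIntegral.integral_of_le hs.1
  -- uniform bound on the primitive
  set Bg : ℝ := ∫ u in Set.Ioc 0 T, ‖g u‖ with hBg_def
  have hIb : ∀ s ∈ Set.Icc (0:ℝ) T, ‖I s‖ ≤ Bg := by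
    intro s hs
    calc ‖I s‖ ≤ ∫ u in Set.Ioc 0 s, ‖g u‖ := norm_integral_le_integral_norm _
      _ ≤ Bg := setIntegral_mono_set hgT.norm
          (Filter.Eventually.of_forall fun u => norm_nonneg _)
          (HasSubset.Subset.eventuallyLE (Set.Ioc_subset_Ioc_right hs.2))
  -- continuity of the primitive and a maximum point
  have hgIcc : IntegrableOn g (Set.Icc 0 T) volume := by
    rw [IntegrableOn, ← Measure.restrict_congr_set Ioc_ae_eq_Icc]
    exact hgT
  have hIcont : ContinuousOn I (Set.Icc 0 T) :=
    intervalIntegral.continuousOn_primitive hgIcc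
  obtain ⟨t₀, ht₀, hmax⟩ := isCompact_Icc.exists_isMaxOn (Set.nonempty_Icc.2 hT.le)
    (continuous_norm.comp_continuousOn hIcont)
  set M : ℝ := ‖I t₀‖ with hM_def
  have hM0 : 0 ≤ M := norm_nonneg _
  have hMax : ∀ s ∈ Set.Icc (0:ℝ) T, ‖I s‖ ≤ M := fun s hs => hmax hs
  -- transfer of a.e. statements
  have htransfer : ∀ (P : ℝ → Prop), (∀ᵐ s ∂(volume.restrict (Set.Ioo 0 T)), P s) →
      ∀ᵐ s ∂(volume.restrict (Set.Ioc 0 t₀)), P s := by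
    intro P hP
    rw [Filter.eventually_iff, mem_ae_iff, Measure.restrict_apply' measurableSet_Ioo] at hP
    rw [Filter.eventually_iff, mem_ae_iff, Measure.restrict_apply' measurableSet_Ioc]
    have hsub : {x | P x}ᶜ ∩ Set.Ioc 0 t₀ ⊆ ({x | P x}ᶜ ∩ Set.Ioo 0 T) ∪ {T} := by
      rintro x ⟨hx1, hx2, hx3⟩
      rcases lt_or_eq_of_le (hx3.trans ht₀.2) with h | h
      · exact Or.inl ⟨hx1, hx2, h⟩
      · exact Or.inr (Set.mem_singleton_iff.2 h)
    exact measure_mono_null hsub (measure_union_null hP (measure_singleton T))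
  have hgt₀ : IntegrableOn g (Set.Ioc 0 t₀) volume :=
    hgT.mono_set (Set.Ioc_subset_Ioc_right ht₀.2)
  -- a.e. bound on the integrand
  have haeb : ∀ᵐ s ∂(volume.restrict (Set.Ioc 0 t₀)),
      ⟪A (g s), I s⟫ ≤ ‖w₁ s - w₂ s‖ * M := by
    filter_upwards [htransfer _ heq₁, htransfer _ heq₂,
      ae_restrict_mem measurableSet_Ioc] with s he1 he2 hs
    have hsIcc : s ∈ Set.Icc (0:ℝ) T := ⟨hs.1.le, hs.2.trans ht₀.2⟩
    have hAg : A (g s) = (w₁ s - w₂ s)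
        - lam⁻¹ • ((σ₁ s - π (σ₁ s)) - (σ₂ s - π (σ₂ s))) := by
      have hmap : A (g s) = A (σ₁' s) - A (σ₂' s) := map_sub A _ _
      rw [hmap, eq_sub_of_add_eq he1, eq_sub_of_add_eq he2, smul_sub]
      module
    have hρs : σ₁ s - σ₂ s = I s := hρ s hsIcc
    have hmono : (0:ℝ) ≤ ⟪(σ₁ s - π (σ₁ s)) - (σ₂ s - π (σ₂ s)), σ₁ s - σ₂ s⟫ :=
      proj_mono' π K hπK hπ (σ₁ s) (σ₂ s)
    rw [hρs] at hmono
    calc ⟪A (g s), I s⟫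
        = ⟪w₁ s - w₂ s, I s⟫
          - lam⁻¹ * ⟪(σ₁ s - π (σ₁ s)) - (σ₂ s - π (σ₂ s)), I s⟫ := by
          rw [hAg, inner_sub_left, real_inner_smul_left]
      _ ≤ ⟪w₁ s - w₂ s, I s⟫ := by
          have := mul_nonneg (inv_nonneg.2 hlam.le) hmono
          linarith
      _ ≤ ‖w₁ s - w₂ s‖ * ‖I s‖ := real_inner_le_norm _ _
      _ ≤ ‖w₁ s - w₂ s‖ * M :=
          mul_le_mul_of_nonneg_left (hMax s hsIcc) (norm_nonneg _)
  -- integrability of both sides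
  have hAgI : Integrable (fun s => ⟪A (g s), I s⟫) (volume.restrict (Set.Ioc 0 t₀)) := by
    have hIm : AEStronglyMeasurable I (volume.restrict (Set.Ioc 0 t₀)) :=
      (hIcont.mono (Set.Ioc_subset_Icc_self.trans
        (Set.Icc_subset_Icc_right ht₀.2))).aestronglyMeasurable measurableSet_Ioc
    refine (hgt₀.norm.const_mul (‖A‖ * Bg)).mono'
      ((A.continuous.comp_aestronglyMeasurable hgt₀.aestronglyMeasurable).inner hIm) ?_
    filter_upwards [ae_restrict_mem measurableSet_Ioc] with s hs
    have hsIcc : s ∈ Set.Icc (0:ℝ) T := ⟨hs.1.le, hs.2.trans ht₀.2⟩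
    have hBg0 : 0 ≤ Bg := integral_nonneg fun u => norm_nonneg _
    calc ‖⟪A (g s), I s⟫‖ ≤ ‖A (g s)‖ * ‖I s‖ := norm_inner_le_norm _ _
      _ ≤ (‖A‖ * ‖g s‖) * Bg := by
          have h1 : ‖A (g s)‖ ≤ ‖A‖ * ‖g s‖ := A.le_opNorm _
          have h2 : ‖I s‖ ≤ Bg := hIb s hsIcc
          exact mul_le_mul h1 h2 (norm_nonneg _)
            (mul_nonneg (norm_nonneg _) (norm_nonneg _))
      _ = (‖A‖ * Bg) * ‖g s‖ := by ring
  have hwI : Integrable (fun s => ‖w₁ s - w₂ s‖ * M) (volume.restrict (Set.Ioc 0 t₀)) :=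
    (hΔwT.mono_set (Set.Ioc_subset_Ioc_right ht₀.2)).norm.mul_const M
  -- the energy estimate at the maximum point
  have hEbound : γ * M ^ 2 ≤ 2 * (C * M) := by
    have h1 : γ * ‖I t₀‖ ^ 2 ≤ ⟪A (I t₀), I t₀⟫ := hAcoer (I t₀)
    have h2 : (⟪A (I t₀), I t₀⟫ : ℝ)
        = 2 * ∫ s in Set.Ioc 0 t₀, ⟪A (g s), I s⟫ :=
      key_identity' A hAsym t₀ g hgt₀
    have h3 : ∫ s in Set.Ioc 0 t₀, ⟪A (g s), I s⟫
        ≤ ∫ s in Set.Ioc 0 t₀, ‖w₁ s - w₂ s‖ * M :=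
      integral_mono_ae hAgI hwI haeb
    have h4 : ∫ s in Set.Ioc 0 t₀, ‖w₁ s - w₂ s‖ * M
        = (∫ s in Set.Ioc 0 t₀, ‖w₁ s - w₂ s‖) * M :=
      integral_mul_const M _
    have h5 : ∫ s in Set.Ioc 0 t₀, ‖w₁ s - w₂ s‖ ≤ C :=
      setIntegral_mono_set hΔwT.norm
        (Filter.Eventually.of_forall fun u => norm_nonneg _)
        (HasSubset.Subset.eventuallyLE (Set.Ioc_subset_Ioc_right ht₀.2))
    have h6 : (∫ s in Set.Ioc 0 t₀, ‖w₁ s - w₂ s‖) * M ≤ C * M :=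
      mul_le_mul_of_nonneg_right h5 hM0
    calc γ * M ^ 2 ≤ ⟪A (I t₀), I t₀⟫ := h1
      _ = 2 * ∫ s in Set.Ioc 0 t₀, ⟪A (g s), I s⟫ := h2
      _ ≤ 2 * (C * M) := by linarith
  have hMC : M ≤ 2 / γ * C := by
    rcases eq_or_lt_of_le hM0 with h | h
    · rw [← h]
      positivity
    · have hγM : γ * M ≤ 2 * C := by nlinarith
      rw [div_mul_eq_mul_div, le_div_iff₀ hγ]
      nlinarith
  intro t ht
  rw [hρ t ht]
  calc ‖I t‖ ≤ M := hMax t ht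
    _ ≤ 2 / γ * C := hMC
    _ = 2 / γ * ∫ s in (0:ℝ)..T, ‖w₁ s - w₂ s‖ := by
        rw [intervalIntegral.integral_of_le hT.le]
end

section
/- Let H be a real Hilbert space, 𝒞 ⊆ H a nonempty closed convex set, and 𝔸 : H → H a bounded symmetric coercive linear operator with coercivity constant γ > 0. Let T > 0, let g : (0,T) → H, and for i = 1, 2 let σᵢ : [0,T] → H be an H¹(0,T;H)-curve with derivative σᵢ' such that σ₁(0) = σ₂(0) and, for almost every t ∈ (0,T): σᵢ(t) ∈ 𝒞 and ⟪𝔸σᵢ'(t) − g(t), τ − σᵢ(t)⟫ ≥ 0 for all τ ∈ 𝒞. Then σ₁(t) = σ₂(t) for all t ∈ [0,T]. (Uniqueness of the reduced solution / stress field of quasi-static perfect plasticity in abstract form.) -/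
open RealInnerProductSpace MeasureTheory

/-- The basic energy identity for the quadratic form of a symmetric operator along
an indefinite Bochner integral, proved by symmetrizing a double integral. -/
lemma square_identity {H : Type*} [NormedAddCommGroup H] [InnerProductSpace ℝ H]
    [CompleteSpace H] (A : H →L[ℝ] H) (hAsym : ∀ x y, ⟪A x, y⟫ = ⟪x, A y⟫)
    (t : ℝ) (f : ℝ → H) (hfi : Integrable f (volume.restrict (Set.Ioo 0 t))) :
    ⟪A (∫ s in Set.Ioo 0 t, f s), ∫ s in Set.Ioo 0 t, f s⟫ =
      2 * ∫ s in Set.Ioo 0 t, ⟪A (f s), ∫ u in Set.Ioo 0 s, f u⟫ := by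
  haveI : IsFiniteMeasure (volume.restrict (Set.Ioo (0:ℝ) t)) := by
    constructor
    rw [Measure.restrict_apply_univ]
    exact measure_Ioo_lt_top
  set k : ℝ → ℝ → ℝ := fun s u => ⟪A (f s), f u⟫ with hkdef
  have hmt : AEStronglyMeasurable f (volume.restrict (Set.Ioo 0 t)) := hfi.1
  have hKm : AEStronglyMeasurable (Function.uncurry k)
      ((volume.restrict (Set.Ioo 0 t)).prod (volume.restrict (Set.Ioo 0 t))) := by
    have h1 : AEStronglyMeasurable (fun p : ℝ × ℝ => f p.1)
        ((volume.restrict (Set.Ioo 0 t)).prod (volume.restrict (Set.Ioo 0 t))) :=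
      hmt.comp_quasiMeasurePreserving Measure.quasiMeasurePreserving_fst
    have h2 : AEStronglyMeasurable (fun p : ℝ × ℝ => f p.2)
        ((volume.restrict (Set.Ioo 0 t)).prod (volume.restrict (Set.Ioo 0 t))) :=
      hmt.comp_quasiMeasurePreserving Measure.quasiMeasurePreserving_snd
    have hcont : Continuous fun q : H × H => (⟪A q.1, q.2⟫ : ℝ) :=
      continuous_inner.comp ((A.continuous.comp continuous_fst).prodMk continuous_snd)
    exact hcont.comp_aestronglyMeasurable (h1.prodMk h2)
  have hKi : Integrable (Function.uncurry k)
      ((volume.restrict (Set.Ioo 0 t)).prod (volume.restrict (Set.Ioo 0 t))) := by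
    have hbound : Integrable (fun p : ℝ × ℝ => (‖A‖ * ‖f p.1‖) * ‖f p.2‖)
        ((volume.restrict (Set.Ioo 0 t)).prod (volume.restrict (Set.Ioo 0 t))) :=
      (hfi.norm.const_mul ‖A‖).mul_prod hfi.norm
    refine hbound.mono' hKm (Filter.Eventually.of_forall fun p => ?_)
    calc ‖Function.uncurry k p‖ ≤ ‖A (f p.1)‖ * ‖f p.2‖ := norm_inner_le_norm _ _
      _ ≤ (‖A‖ * ‖f p.1‖) * ‖f p.2‖ :=
        mul_le_mul_of_nonneg_right (A.le_opNorm _) (norm_nonneg _)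
  -- the quadratic form equals the double integral of the kernel
  have lhs_eq : (⟪A (∫ s in Set.Ioo 0 t, f s), ∫ s in Set.Ioo 0 t, f s⟫ : ℝ)
      = ∫ s in Set.Ioo 0 t, ∫ u in Set.Ioo 0 t, k s u := by
    rw [← A.integral_comp_comm hfi, real_inner_comm, ← integral_inner (A.integrable_comp hfi)]
    refine integral_congr_ae (Filter.Eventually.of_forall fun s => ?_)
    show (⟪∫ u in Set.Ioo 0 t, f u, A (f s)⟫ : ℝ) = ∫ u in Set.Ioo 0 t, k s u
    rw [real_inner_comm, ← integral_inner hfi (A (f s))]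
  have prod_eq : (∫ s in Set.Ioo 0 t, ∫ u in Set.Ioo 0 t, k s u)
      = ∫ p, Function.uncurry k p
          ∂((volume.restrict (Set.Ioo 0 t)).prod (volume.restrict (Set.Ioo 0 t))) :=
    integral_integral hKi
  -- the diagonal is null
  have hdiag : ((volume.restrict (Set.Ioo 0 t)).prod (volume.restrict (Set.Ioo 0 t)))
      {p : ℝ × ℝ | p.1 = p.2} = 0 := by
    have hmeas : MeasurableSet {p : ℝ × ℝ | p.1 = p.2} :=
      measurableSet_eq_fun measurable_fst measurable_snd
    rw [Measure.prod_apply hmeas]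
    have hz : ∀ s : ℝ, (volume.restrict (Set.Ioo 0 t))
        (Prod.mk s ⁻¹' {p : ℝ × ℝ | p.1 = p.2}) = 0 := by
      intro s
      have hpre : Prod.mk s ⁻¹' {p : ℝ × ℝ | p.1 = p.2} = {s} := by
        ext u; simp [eq_comm]
      rw [hpre, Measure.restrict_apply (measurableSet_singleton s)]
      exact measure_mono_null Set.inter_subset_left Real.volume_singleton
    simp [hz]
  set D := {p : ℝ × ℝ | p.2 < p.1} with hD
  set U := {p : ℝ × ℝ | p.1 < p.2} with hU
  have hDm : MeasurableSet D := measurableSet_lt measurable_snd measurable_fst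
  have hUm : MeasurableSet U := measurableSet_lt measurable_fst measurable_snd
  have hsplit : (∫ p, Function.uncurry k p
        ∂((volume.restrict (Set.Ioo 0 t)).prod (volume.restrict (Set.Ioo 0 t))))
      = (∫ p, D.indicator (Function.uncurry k) p
            ∂((volume.restrict (Set.Ioo 0 t)).prod (volume.restrict (Set.Ioo 0 t))))
        + ∫ p, U.indicator (Function.uncurry k) p
            ∂((volume.restrict (Set.Ioo 0 t)).prod (volume.restrict (Set.Ioo 0 t))) := by
    have hne : ∀ᵐ p ∂((volume.restrict (Set.Ioo 0 t)).prod (volume.restrict (Set.Ioo 0 t))),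
        p.1 ≠ p.2 := by
      rw [ae_iff, show {p : ℝ × ℝ | ¬p.1 ≠ p.2} = {p : ℝ × ℝ | p.1 = p.2} by ext p; simp]
      exact hdiag
    have hKae : Function.uncurry k
        =ᵐ[(volume.restrict (Set.Ioo 0 t)).prod (volume.restrict (Set.Ioo 0 t))]
        fun p => D.indicator (Function.uncurry k) p + U.indicator (Function.uncurry k) p := by
      filter_upwards [hne] with p hp
      rcases lt_or_gt_of_ne hp with h | h
      · simp only [hD, hU, Set.indicator_apply, Set.mem_setOf_eq]
        rw [if_pos h, if_neg (lt_asymm h), zero_add]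
      · simp only [hD, hU, Set.indicator_apply, Set.mem_setOf_eq]
        rw [if_pos h, if_neg (lt_asymm h), add_zero]
    rw [integral_congr_ae hKae, integral_add (hKi.indicator hDm) (hKi.indicator hUm)]
  have hswap : (∫ p, U.indicator (Function.uncurry k) p
        ∂((volume.restrict (Set.Ioo 0 t)).prod (volume.restrict (Set.Ioo 0 t))))
      = ∫ p, D.indicator (Function.uncurry k) p
          ∂((volume.restrict (Set.Ioo 0 t)).prod (volume.restrict (Set.Ioo 0 t))) := by
    have h1 : (∫ p, U.indicator (Function.uncurry k) p.swap
          ∂((volume.restrict (Set.Ioo 0 t)).prod (volume.restrict (Set.Ioo 0 t))))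
        = ∫ p, U.indicator (Function.uncurry k) p
          ∂((volume.restrict (Set.Ioo 0 t)).prod (volume.restrict (Set.Ioo 0 t))) :=
      integral_prod_swap _
    rw [← h1]
    refine integral_congr_ae (Filter.Eventually.of_forall fun p => ?_)
    simp only [hD, hU, Set.indicator_apply, Set.mem_setOf_eq, Prod.fst_swap, Prod.snd_swap]
    by_cases h : p.2 < p.1
    · rw [if_pos h, if_pos h]
      show (⟪A (f p.2), f p.1⟫ : ℝ) = ⟪A (f p.1), f p.2⟫
      rw [hAsym, real_inner_comm]
    · rw [if_neg h, if_neg h]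
  have hlow : (∫ p, D.indicator (Function.uncurry k) p
        ∂((volume.restrict (Set.Ioo 0 t)).prod (volume.restrict (Set.Ioo 0 t))))
      = ∫ s in Set.Ioo 0 t, ⟪A (f s), ∫ u in Set.Ioo 0 s, f u⟫ := by
    have hDI : Integrable (Function.uncurry fun s u => D.indicator (Function.uncurry k) (s, u))
        ((volume.restrict (Set.Ioo 0 t)).prod (volume.restrict (Set.Ioo 0 t))) :=
      hKi.indicator hDm
    have hit : (∫ p, D.indicator (Function.uncurry k) p
          ∂((volume.restrict (Set.Ioo 0 t)).prod (volume.restrict (Set.Ioo 0 t))))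
        = ∫ s in Set.Ioo 0 t, ∫ u in Set.Ioo 0 t,
            D.indicator (Function.uncurry k) (s, u) :=
      (integral_integral hDI).symm
    rw [hit]
    refine integral_congr_ae ?_
    filter_upwards [ae_restrict_mem measurableSet_Ioo] with s hs
    have h1 : (fun u => D.indicator (Function.uncurry k) (s, u))
        = fun u => (Set.Iio s).indicator (fun u => (⟪A (f s), f u⟫ : ℝ)) u := by
      funext u
      simp only [hD, Set.indicator_apply, Set.mem_setOf_eq, Set.mem_Iio]
      rfl
    rw [h1]
    rw [integral_indicator measurableSet_Iio,
      Measure.restrict_restrict measurableSet_Iio]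
    have hset : Set.Iio s ∩ Set.Ioo 0 t = Set.Ioo 0 s := by
      ext u
      simp only [Set.mem_inter_iff, Set.mem_Iio, Set.mem_Ioo]
      constructor
      · rintro ⟨h1, h2, h3⟩; exact ⟨h2, h1⟩
      · rintro ⟨h1, h2⟩; exact ⟨h2, h1, h2.trans hs.2⟩
    rw [hset]
    exact integral_inner (MeasureTheory.IntegrableOn.mono_set hfi (Set.Ioo_subset_Ioo le_rfl hs.2.le)) (A (f s))
  rw [lhs_eq, prod_eq, hsplit, hswap, hlow]
  ring

/-- Uniqueness of the reduced solution (stress field) of quasi-static perfect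
plasticity in abstract form: two `H¹(0,T;H)`-curves with the same initial value
solving the evolution variational inequality
`σᵢ(t) ∈ 𝒞`, `⟪𝔸σᵢ'(t) − g(t), τ − σᵢ(t)⟫ ≥ 0 ∀ τ ∈ 𝒞` a.e. coincide on `[0,T]`. -/
theorem reduced_solution_uniqueness
    {H : Type*} [NormedAddCommGroup H] [InnerProductSpace ℝ H] [CompleteSpace H]
    (𝒞 : Set H) (h𝒞 : 𝒞.Nonempty) (h𝒞closed : IsClosed 𝒞) (h𝒞conv : Convex ℝ 𝒞)
    (A : H →L[ℝ] H) (hAsym : ∀ x y, ⟪A x, y⟫ = ⟪x, A y⟫)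
    (γ : ℝ) (hγ : 0 < γ) (hAcoer : ∀ h : H, γ * ‖h‖ ^ 2 ≤ ⟪A h, h⟫)
    (T : ℝ) (hT : 0 < T) (g : ℝ → H)
    (σ₁ σ₂ σ₁' σ₂' : ℝ → H)
    (hσ₁ : IsH1Curve T σ₁ σ₁') (hσ₂ : IsH1Curve T σ₂ σ₂')
    (hinit : σ₁ 0 = σ₂ 0)
    (hvi₁ : ∀ᵐ t ∂(volume.restrict (Set.Ioo 0 T)),
      σ₁ t ∈ 𝒞 ∧ ∀ τ ∈ 𝒞, 0 ≤ ⟪A (σ₁' t) - g t, τ - σ₁ t⟫)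
    (hvi₂ : ∀ᵐ t ∂(volume.restrict (Set.Ioo 0 T)),
      σ₂ t ∈ 𝒞 ∧ ∀ τ ∈ 𝒞, 0 ≤ ⟪A (σ₂' t) - g t, τ - σ₂ t⟫) :
    ∀ t ∈ Set.Icc 0 T, σ₁ t = σ₂ t := by
  obtain ⟨hm₁, hc₁⟩ := hσ₁
  obtain ⟨hm₂, hc₂⟩ := hσ₂
  haveI : IsFiniteMeasure (volume.restrict (Set.Ioo (0:ℝ) T)) := by
    constructor
    rw [Measure.restrict_apply_univ]
    exact measure_Ioo_lt_top
  set f : ℝ → H := fun s => σ₁' s - σ₂' s with hfdef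
  have hfi : Integrable f (volume.restrict (Set.Ioo 0 T)) := (hm₁.sub hm₂).integrable one_le_two
  have hi₁ : Integrable σ₁' (volume.restrict (Set.Ioo 0 T)) := hm₁.integrable one_le_two
  have hi₂ : Integrable σ₂' (volume.restrict (Set.Ioo 0 T)) := hm₂.integrable one_le_two
  -- the difference of the curves is the indefinite integral of `f`
  have hδ : ∀ t ∈ Set.Icc (0:ℝ) T, σ₁ t - σ₂ t = ∫ s in Set.Ioo 0 t, f s := by
    intro t ht
    have key : ∀ φ : ℝ → H, Integrable φ (volume.restrict (Set.Ioo 0 T)) →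
        IntervalIntegrable φ volume 0 t ∧
        (∫ s in (0:ℝ)..t, φ s) = ∫ s in Set.Ioo 0 t, φ s := by
      intro φ hφ
      have h1 : IntegrableOn φ (Set.Ioo 0 t) volume :=
        IntegrableOn.mono_set hφ (Set.Ioo_subset_Ioo le_rfl ht.2)
      have h2 : IntegrableOn φ (Set.Ioc 0 t) volume :=
        (integrableOn_Ioc_iff_integrableOn_Ioo).mpr h1
      refine ⟨(intervalIntegrable_iff_integrableOn_Ioc_of_le ht.1).mpr h2, ?_⟩
      rw [intervalIntegral.integral_of_le ht.1, integral_Ioc_eq_integral_Ioo]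
    obtain ⟨ii₁, e₁⟩ := key σ₁' hi₁
    obtain ⟨ii₂, e₂⟩ := key σ₂' hi₂
    obtain ⟨iif, ef⟩ := key f hfi
    rw [hc₁ t ht, hc₂ t ht, hinit, ← ef,
      show (∫ s in (0:ℝ)..t, f s) = (∫ s in (0:ℝ)..t, σ₁' s) - ∫ s in (0:ℝ)..t, σ₂' s from
        intervalIntegral.integral_sub ii₁ ii₂]
    abel
  -- the dissipation inequality, a.e.
  have hae : ∀ᵐ s ∂(volume.restrict (Set.Ioo 0 T)),
      ⟪A (f s), ∫ u in Set.Ioo 0 s, f u⟫ ≤ 0 := by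
    filter_upwards [hvi₁, hvi₂, ae_restrict_mem measurableSet_Ioo] with s h1 h2 hs
    have e1 := h1.2 (σ₂ s) h2.1
    have e2 := h2.2 (σ₁ s) h1.1
    rw [← hδ s ⟨hs.1.le, hs.2.le⟩]
    have expand : ⟪A (σ₁' s) - g s, σ₂ s - σ₁ s⟫ + ⟪A (σ₂' s) - g s, σ₁ s - σ₂ s⟫
        = -⟪A (f s), σ₁ s - σ₂ s⟫ := by
      simp only [hfdef, map_sub, inner_sub_left, inner_sub_right]
      ring
    linarith
  intro t ht
  rcases eq_or_lt_of_le ht.1 with rfl | ht0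
  · exact hinit
  have hle : volume.restrict (Set.Ioo (0:ℝ) t) ≤ volume.restrict (Set.Ioo (0:ℝ) T) :=
    Measure.restrict_mono (Set.Ioo_subset_Ioo le_rfl ht.2) le_rfl
  have hkey := square_identity A hAsym t f (hfi.mono_measure hle)
  have hneg : ∫ s in Set.Ioo (0:ℝ) t, ⟪A (f s), ∫ u in Set.Ioo 0 s, f u⟫ ≤ 0 :=
    integral_nonpos_of_ae (hae.filter_mono (ae_mono hle))
  have hco := hAcoer (∫ s in Set.Ioo (0:ℝ) t, f s)
  have hx2 : ‖∫ s in Set.Ioo (0:ℝ) t, f s‖ ^ 2 ≤ 0 := by nlinarith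
  have hFz : (∫ s in Set.Ioo (0:ℝ) t, f s) = 0 := by
    have := le_antisymm hx2 (sq_nonneg _)
    exact norm_eq_zero.mp (pow_eq_zero_iff two_ne_zero |>.mp this)
  have hd := hδ t ht
  rw [hFz] at hd
  exact sub_eq_zero.mp hd
end

section
/- Let H be a real Hilbert space, 𝒞 ⊆ H a nonempty closed convex set, and 𝔸 : H → H a bounded symmetric coercive linear operator with coercivity constant γ > 0. Let T > 0, let g ∈ L²(0,T;H), and let σ : [0,T] → H be an H¹(0,T;H)-curve with derivative σ' such that, for almost every t ∈ (0,T): σ(t) ∈ 𝒞 and ⟪𝔸σ'(t) − g(t), τ − σ(t)⟫ ≥ 0 for all τ ∈ 𝒞. Then ‖σ'(t)‖ ≤ γ⁻¹ ‖g(t)‖ for almost every t ∈ (0,T); in particular, (∫₀ᵀ‖σ'(t)‖²dt)^{1/2} ≤ γ⁻¹ (∫₀ᵀ‖g(t)‖²dt)^{1/2}. -/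
open RealInnerProductSpace MeasureTheory

/-- A priori bound for reduced solutions of the evolution variational inequality:
`‖σ'(t)‖ ≤ γ⁻¹‖g(t)‖` a.e. in `(0,T)`, and consequently
`(∫₀ᵀ‖σ'‖²)^{1/2} ≤ γ⁻¹ (∫₀ᵀ‖g‖²)^{1/2}`. -/
theorem reduced_solution_apriori_bound
    {H : Type*} [NormedAddCommGroup H] [InnerProductSpace ℝ H] [CompleteSpace H]
    (𝒞 : Set H) (h𝒞 : 𝒞.Nonempty) (h𝒞closed : IsClosed 𝒞) (h𝒞conv : Convex ℝ 𝒞)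
    (A : H →L[ℝ] H) (hAsym : ∀ x y, ⟪A x, y⟫ = ⟪x, A y⟫)
    (γ : ℝ) (hγ : 0 < γ) (hAcoer : ∀ h : H, γ * ‖h‖ ^ 2 ≤ ⟪A h, h⟫)
    (T : ℝ) (hT : 0 < T)
    (g : ℝ → H) (hg : MemLp g 2 (volume.restrict (Set.Ioo 0 T)))
    (σ σ' : ℝ → H) (hσ : IsH1Curve T σ σ')
    (hvi : ∀ᵐ t ∂(volume.restrict (Set.Ioo 0 T)),
      σ t ∈ 𝒞 ∧ ∀ τ ∈ 𝒞, 0 ≤ ⟪A (σ' t) - g t, τ - σ t⟫) :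
    (∀ᵐ t ∂(volume.restrict (Set.Ioo 0 T)), ‖σ' t‖ ≤ γ⁻¹ * ‖g t‖) ∧
      Real.sqrt (∫ t in (0:ℝ)..T, ‖σ' t‖ ^ 2) ≤
        γ⁻¹ * Real.sqrt (∫ t in (0:ℝ)..T, ‖g t‖ ^ 2) := by
  haveI : IsFiniteMeasure (volume.restrict (Set.Ioo 0 T)) :=
    ⟨by rw [Measure.restrict_apply_univ]; exact measure_Ioo_lt_top⟩
  -- σ' is integrable on (0,T) and on [0,T]
  have hInt : IntegrableOn σ' (Set.Ioo 0 T) volume := hσ.1.integrable one_le_two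
  have hIntIcc : IntegrableOn σ' (Set.Icc 0 T) volume :=
    (integrableOn_Icc_iff_integrableOn_Ioo).mpr hInt
  have hII : ∀ a b, a ∈ Set.Icc 0 T → b ∈ Set.Icc 0 T → IntervalIntegrable σ' volume a b := by
    intro a b ha hb
    rw [intervalIntegrable_iff]
    exact hIntIcc.mono_set (Set.uIoc_subset_uIcc.trans (Set.uIcc_subset_Icc ha hb))
  -- σ is continuous on [0,T]
  have hσcont : ContinuousOn σ (Set.Icc 0 T) := by
    have h1 : ContinuousOn (fun x => σ 0 + ∫ s in Set.Ioc 0 x, σ' s) (Set.Icc 0 T) :=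
      continuousOn_const.add (intervalIntegral.continuousOn_primitive hIntIcc)
    refine h1.congr fun x hx => ?_
    rw [hσ.2 x hx, intervalIntegral.integral_of_le hx.1]
  -- σ takes values in 𝒞 on all of [0,T]
  have hmem : ∀ᵐ t ∂(volume.restrict (Set.Ioo 0 T)), σ t ∈ 𝒞 := hvi.mono fun t ht => ht.1
  have hC : ∀ s ∈ Set.Icc 0 T, σ s ∈ 𝒞 := by
    intro s hs
    have hscl : s ∈ closure (Set.Ioo 0 T) := by
      rw [closure_Ioo hT.ne]; exact hs
    have hfreq : ∃ᶠ x in nhdsWithin s (Set.Ioo 0 T), σ x ∈ 𝒞 := by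
      by_contra hcon
      rw [Filter.not_frequently] at hcon
      rw [eventually_nhdsWithin_iff, eventually_nhds_iff] at hcon
      obtain ⟨U, hU, hUo, hsU⟩ := hcon
      have hVne : (U ∩ Set.Ioo 0 T).Nonempty := by
        rw [mem_closure_iff] at hscl
        exact hscl U hUo hsU
      have hVpos : 0 < volume (U ∩ Set.Ioo 0 T) :=
        (hUo.inter isOpen_Ioo).measure_pos volume hVne
      have hV0 : volume.restrict (Set.Ioo 0 T) (U ∩ Set.Ioo 0 T) = 0 := by
        refine measure_mono_null (fun x hx => ?_) (ae_iff.mp hmem)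
        exact fun hmem' => hU x hx.1 hx.2 hmem'
      rw [Measure.restrict_apply (hUo.inter isOpen_Ioo).measurableSet,
        Set.inter_eq_self_of_subset_left Set.inter_subset_right] at hV0
      exact absurd hV0 hVpos.ne'
    have htend : Filter.Tendsto σ (nhdsWithin s (Set.Ioo 0 T)) (nhds (σ s)) :=
      (hσcont s hs).mono_left (nhdsWithin_mono _ Set.Ioo_subset_Icc_self)
    have := mem_closure_of_frequently_of_tendsto hfreq htend
    rwa [h𝒞closed.closure_eq] at this
  -- Lebesgue differentiation for the indefinite integral
  set f : ℝ → H := (Set.Ioo 0 T).indicator σ' with hf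
  have hfint : Integrable f volume := (integrable_indicator_iff measurableSet_Ioo).mpr hInt
  have hLD := (IsUnifLocDoublingMeasure.vitaliFamily (volume : Measure ℝ) 1).ae_tendsto_average
    hfint.locallyIntegrable
  have hLD' : ∀ᵐ t ∂(volume.restrict (Set.Ioo 0 T)),
      Filter.Tendsto (fun a => ⨍ y in a, f y)
        ((IsUnifLocDoublingMeasure.vitaliFamily (volume : Measure ℝ) 1).filterAt t)
        (nhds (f t)) := ae_restrict_of_ae hLD
  -- the pointwise bound
  have hpt : ∀ᵐ t ∂(volume.restrict (Set.Ioo 0 T)), ‖σ' t‖ ≤ γ⁻¹ * ‖g t‖ := by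
    filter_upwards [hvi, hLD', ae_restrict_mem measurableSet_Ioo] with t hvit hLDt ht
    set v : H := A (σ' t) - g t with hv
    have htend : Filter.Tendsto (fun y => ⨍ z in Set.Icc y t, f z) (nhdsWithin t (Set.Iio t))
        (nhds (f t)) := hLDt.comp (Real.tendsto_Icc_vitaliFamily_left t)
    have hft : f t = σ' t := Set.indicator_of_mem ht σ'
    have hev : ∀ᶠ y in nhdsWithin t (Set.Iio t), y ∈ Set.Ioo 0 t :=
      Ioo_mem_nhdsLT_of_mem ⟨ht.1, le_refl t⟩
    have key : ∀ᶠ y in nhdsWithin t (Set.Iio t), ⟪v, ⨍ z in Set.Icc y t, f z⟫ ≤ 0 := by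
      filter_upwards [hev] with y hy
      have h0y : 0 < y := hy.1
      have hyt : y < t := hy.2
      have hsub : Set.Icc y t ⊆ Set.Ioo 0 T := fun z hz =>
        ⟨lt_of_lt_of_le h0y hz.1, lt_of_le_of_lt hz.2 ht.2⟩
      have htI : t ∈ Set.Icc (0:ℝ) T := ⟨(h0y.trans hyt).le, ht.2.le⟩
      have hyI : y ∈ Set.Icc (0:ℝ) T := ⟨h0y.le, (hyt.trans ht.2).le⟩
      have havg : ⨍ z in Set.Icc y t, f z = (t - y)⁻¹ • (σ t - σ y) := by
        rw [setAverage_eq]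
        have hvol : (volume (Set.Icc y t)).toReal = t - y := by
          rw [Real.volume_Icc, ENNReal.toReal_ofReal (by linarith)]
        rw [measureReal_def, hvol]
        congr 1
        have heq : Set.EqOn f σ' (Set.Icc y t) := fun z hz => Set.indicator_of_mem (hsub hz) σ'
        rw [setIntegral_congr_fun measurableSet_Icc heq, integral_Icc_eq_integral_Ioc,
          ← intervalIntegral.integral_of_le hyt.le,
          ← intervalIntegral.integral_interval_sub_left (hII 0 t ⟨le_refl 0, hT.le⟩ htI)
            (hII 0 y ⟨le_refl 0, hT.le⟩ hyI),
          hσ.2 t htI, hσ.2 y hyI]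
        abel
      rw [havg, real_inner_smul_right]
      have hστ : 0 ≤ ⟪v, σ y - σ t⟫ := hvit.2 (σ y) (hC y hyI)
      have hneg : ⟪v, σ t - σ y⟫ ≤ 0 := by
        have : σ t - σ y = -(σ y - σ t) := by abel
        rw [this, inner_neg_right]; linarith
      exact mul_nonpos_of_nonneg_of_nonpos (inv_nonneg.mpr (by linarith)) hneg
    have hlim : ⟪v, σ' t⟫ ≤ 0 := by
      have htend2 : Filter.Tendsto (fun y => ⟪v, ⨍ z in Set.Icc y t, f z⟫)
          (nhdsWithin t (Set.Iio t)) (nhds ⟪v, σ' t⟫) := by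
        rw [← hft]
        exact Filter.Tendsto.inner tendsto_const_nhds htend
      exact le_of_tendsto htend2 key
    have h1 : γ * ‖σ' t‖ ^ 2 ≤ ⟪A (σ' t), σ' t⟫ := hAcoer _
    have h2 : ⟪A (σ' t), σ' t⟫ = ⟪v, σ' t⟫ + ⟪g t, σ' t⟫ := by
      rw [hv, inner_sub_left]; ring
    have h3 : ⟪g t, σ' t⟫ ≤ ‖g t‖ * ‖σ' t‖ := real_inner_le_norm _ _
    have h4 : γ * ‖σ' t‖ ^ 2 ≤ ‖g t‖ * ‖σ' t‖ := by linarith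
    rcases eq_or_lt_of_le (norm_nonneg (σ' t)) with h0 | h0
    · rw [← h0]; positivity
    · have h5 : γ * ‖σ' t‖ ≤ ‖g t‖ := by nlinarith
      calc ‖σ' t‖ = γ⁻¹ * (γ * ‖σ' t‖) := by field_simp
        _ ≤ γ⁻¹ * ‖g t‖ := by
            exact mul_le_mul_of_nonneg_left h5 (inv_nonneg.mpr hγ.le)
  refine ⟨hpt, ?_⟩
  -- the integral bound
  have hres : volume.restrict (Set.Ioc 0 T) = volume.restrict (Set.Ioo 0 T) :=
    (Measure.restrict_congr_set Ioo_ae_eq_Ioc).symm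
  have hσ2int : Integrable (fun t => ‖σ' t‖ ^ 2) (volume.restrict (Set.Ioo 0 T)) := by
    have := hσ.1.integrable_norm_rpow two_ne_zero ENNReal.ofNat_ne_top
    simpa [ENNReal.toReal_ofNat, Real.rpow_natCast, Real.rpow_two] using this
  have hg2int : Integrable (fun t => ‖g t‖ ^ 2) (volume.restrict (Set.Ioo 0 T)) := by
    have := hg.integrable_norm_rpow two_ne_zero ENNReal.ofNat_ne_top
    simpa [ENNReal.toReal_ofNat, Real.rpow_natCast, Real.rpow_two] using this
  have hmono : ∫ t in Set.Ioo 0 T, ‖σ' t‖ ^ 2 ≤ ∫ t in Set.Ioo 0 T, γ⁻¹ ^ 2 * ‖g t‖ ^ 2 := by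
    refine integral_mono_ae hσ2int (hg2int.const_mul _) ?_
    filter_upwards [hpt] with t hptt
    calc ‖σ' t‖ ^ 2 ≤ (γ⁻¹ * ‖g t‖) ^ 2 := by
          exact pow_le_pow_left₀ (norm_nonneg _) hptt 2
      _ = γ⁻¹ ^ 2 * ‖g t‖ ^ 2 := by ring
  rw [intervalIntegral.integral_of_le hT.le, intervalIntegral.integral_of_le hT.le, hres]
  rw [integral_const_mul] at hmono
  calc Real.sqrt (∫ t in Set.Ioo 0 T, ‖σ' t‖ ^ 2)
      ≤ Real.sqrt (γ⁻¹ ^ 2 * ∫ t in Set.Ioo 0 T, ‖g t‖ ^ 2) := Real.sqrt_le_sqrt hmono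
    _ = γ⁻¹ * Real.sqrt (∫ t in Set.Ioo 0 T, ‖g t‖ ^ 2) := by
        rw [Real.sqrt_mul (sq_nonneg _), Real.sqrt_sq (inv_nonneg.mpr hγ.le)]
end

section
/- Let H be a real Hilbert space, 𝒞 ⊆ H a nonempty closed convex set, 𝔸 : H → H a bounded symmetric coercive linear operator, T > 0, and σ₀ ∈ H. Let g_n → g strongly in L²(0,T;H) and let σ_n : [0,T] → H be H¹(0,T;H)-curves with σ_n(0) = σ₀ whose derivatives σ_n' converge weakly in L²(0,T;H) to some v. Assume that for each n: σ_n(t) ∈ 𝒞 for almost every t ∈ (0,T), and for every τ ∈ L²(0,T;H) with τ(t) ∈ 𝒞 for almost every t one has ∫₀ᵀ ⟪𝔸σ_n'(t) − g_n(t), τ(t) − σ_n(t)⟫ dt ≥ 0. Then the curve σ(t) := σ₀ + ∫₀ᵗ v(s) ds satisfies: σ(t) ∈ 𝒞 for almost every t ∈ (0,T), and for every τ ∈ L²(0,T;H) with τ(t) ∈ 𝒞 for almost every t, ∫₀ᵀ ⟪𝔸v(t) − g(t), τ(t) − σ(t)⟫ dt ≥ 0. (Weak closedness of reduced solutions of the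 quasi-static evolution variational inequality.) -/
set_option linter.unusedSectionVars false
set_option maxHeartbeats 1000000

open RealInnerProductSpace MeasureTheory
open RealInnerProductSpace MeasureTheory Set Filter

namespace RSWC

variable {H : Type*} [NormedAddCommGroup H] [InnerProductSpace ℝ H] [CompleteSpace H]
variable {α : Type*} [MeasurableSpace α] {μ : Measure α}

lemma integrable_inner_of_memℒp {f g : α → H} (hf : MemLp f 2 μ) (hg : MemLp g 2 μ) :
    Integrable (fun x => ⟪f x, g x⟫) μ := by
  have h := L2.integrable_inner (𝕜 := ℝ) (hf.toLp f) (hg.toLp g)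
  refine h.congr ?_
  filter_upwards [hf.coeFn_toLp, hg.coeFn_toLp] with x h1 h2
  rw [h1, h2]

lemma norm_toLp_sq {f : α → H} (hf : MemLp f 2 μ) :
    ‖hf.toLp f‖ ^ 2 = ∫ x, ‖f x‖ ^ 2 ∂μ := by
  rw [← real_inner_self_eq_norm_sq, L2.inner_def]
  refine integral_congr_ae ?_
  filter_upwards [hf.coeFn_toLp] with x h1
  rw [h1, real_inner_self_eq_norm_sq]

lemma integral_inner_eq_inner_toLp {f g : α → H} (hf : MemLp f 2 μ) (hg : MemLp g 2 μ) :
    ∫ x, ⟪f x, g x⟫ ∂μ = ⟪hf.toLp f, hg.toLp g⟫ := by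
  rw [L2.inner_def]
  refine integral_congr_ae ?_
  filter_upwards [hf.coeFn_toLp, hg.coeFn_toLp] with x h1 h2
  rw [h1, h2]

lemma abs_integral_inner_le {f g : α → H} (hf : MemLp f 2 μ) (hg : MemLp g 2 μ) :
    |∫ x, ⟪f x, g x⟫ ∂μ| ≤ Real.sqrt (∫ x, ‖f x‖ ^ 2 ∂μ) * Real.sqrt (∫ x, ‖g x‖ ^ 2 ∂μ) := by
  rw [integral_inner_eq_inner_toLp hf hg, ← norm_toLp_sq hf, ← norm_toLp_sq hg,
    Real.sqrt_sq (norm_nonneg _), Real.sqrt_sq (norm_nonneg _)]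
  exact abs_real_inner_le_norm _ _

variable {T : ℝ}


variable {H : Type*} [NormedAddCommGroup H] [InnerProductSpace ℝ H] [CompleteSpace H]


/-- Convert an interval integral over `0..T` to a set integral over `Ioo 0 T`. -/
lemma ii_eq_Ioo {E : Type*} [NormedAddCommGroup E] [NormedSpace ℝ E] (f : ℝ → E)
    {a b : ℝ} (h : a ≤ b) :
    ∫ t in a..b, f t = ∫ t in Ioo a b, f t := by
  rw [intervalIntegral.integral_of_le h, integral_Ioc_eq_integral_Ioo]

lemma intervalIntegrable_of {f : ℝ → H} (hf : Integrable f (volume.restrict (Ioo 0 T)))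
    {t : ℝ} (ht : t ∈ Icc 0 T) : IntervalIntegrable f volume 0 t := by
  rw [intervalIntegrable_iff_integrableOn_Ioc_of_le ht.1, integrableOn_Ioc_iff_integrableOn_Ioo]
  exact MeasureTheory.IntegrableOn.mono_set hf (Ioo_subset_Ioo le_rfl ht.2)

/-- On `[0, T]`, the primitive of the zero-extension agrees with the primitive. -/
lemma primitive_indicator_eq {f : ℝ → H} {t : ℝ} (ht : t ∈ Icc 0 T) :
    ∫ s in (0:ℝ)..t, (Ioo 0 T).indicator f s = ∫ s in (0:ℝ)..t, f s := by
  refine intervalIntegral.integral_congr_ae (ae_iff.2 (measure_mono_null ?_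
    (Real.volume_singleton (a := T))))
  intro x hx
  simp only [Classical.not_imp, mem_setOf_eq] at hx
  obtain ⟨hx1, hx2⟩ := hx
  rw [uIoc_of_le ht.1] at hx1
  by_contra hxT
  have hxT' : x ≠ T := hxT
  have : x ∈ Ioo (0:ℝ) T := ⟨hx1.1, lt_of_le_of_ne (hx1.2.trans ht.2) hxT'⟩
  exact hx2 (indicator_of_mem this f)

lemma continuous_primitive_indicator {f : ℝ → H}
    (hf : Integrable f (volume.restrict (Ioo 0 T))) :
    Continuous (fun t => ∫ s in (0:ℝ)..t, (Ioo 0 T).indicator f s) := by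
  have : Integrable ((Ioo 0 T).indicator f) volume :=
    (integrable_indicator_iff measurableSet_Ioo).2 hf
  exact intervalIntegral.continuous_primitive (fun a b => this.intervalIntegrable) 0

lemma memℒp_of_continuous {f : ℝ → H} (hf : Continuous f) :
    MemLp f 2 (volume.restrict (Ioo 0 T)) := by
  obtain ⟨C, hC⟩ := (isCompact_Icc (a := (0:ℝ)) (b := T)).exists_bound_of_continuousOn
    hf.continuousOn
  refine MemLp.of_bound hf.aestronglyMeasurable C ?_
  filter_upwards [ae_restrict_mem measurableSet_Ioo] with t ht
  exact hC t (Ioo_subset_Icc_self ht)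

/-- The primitive of the zero-extension is bounded by the `L¹` norm. -/
lemma primitive_norm_le {f : ℝ → H} (hf : Integrable f (volume.restrict (Ioo 0 T)))
    {t : ℝ} (ht : t ∈ Icc 0 T) :
    ‖∫ s in (0:ℝ)..t, (Ioo 0 T).indicator f s‖ ≤ ∫ s in Ioo 0 T, ‖f s‖ := by
  have hind : Integrable ((Ioo 0 T).indicator f) volume :=
    (integrable_indicator_iff measurableSet_Ioo).2 hf
  calc ‖∫ s in (0:ℝ)..t, (Ioo 0 T).indicator f s‖
      ≤ ∫ s in (0:ℝ)..t, ‖(Ioo 0 T).indicator f s‖ :=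
        intervalIntegral.norm_integral_le_integral_norm ht.1
    _ ≤ ∫ s, ‖(Ioo 0 T).indicator f s‖ := by
        rw [intervalIntegral.integral_of_le ht.1]
        exact setIntegral_le_integral hind.norm
          (Eventually.of_forall fun x => norm_nonneg _)
    _ = ∫ s in Ioo 0 T, ‖f s‖ := by
        simp_rw [norm_indicator_eq_indicator_norm]
        exact integral_indicator measurableSet_Ioo

/-- `L¹` norm bounded by `√T` times `L²` norm. -/
lemma integral_norm_le_sqrt {f : ℝ → H} (hT : 0 < T)
    (hf : MemLp f 2 (volume.restrict (Ioo 0 T))) :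
    ∫ s in Ioo 0 T, ‖f s‖ ≤ Real.sqrt T * Real.sqrt (∫ s in Ioo 0 T, ‖f s‖ ^ 2) := by
  have h1 : MemLp (fun _ : ℝ => (1:ℝ)) 2 (volume.restrict (Ioo 0 T)) := memLp_const 1
  have key := abs_integral_inner_le h1 hf.norm
  have e1 : ∫ x in Ioo 0 T, ⟪(1:ℝ), ‖f x‖⟫ = ∫ x in Ioo 0 T, ‖f x‖ := by
    refine integral_congr_ae (Eventually.of_forall fun x => ?_)
    simp [RCLike.inner_apply]
  have e2 : ∫ x in Ioo (0:ℝ) T, ‖(1:ℝ)‖ ^ 2 = T := by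
    simp [Real.volume_Ioo, ENNReal.toReal_ofReal hT.le, hT.le]
  have e3 : ∫ x in Ioo 0 T, ‖(‖f x‖)‖ ^ 2 = ∫ x in Ioo 0 T, ‖f x‖ ^ 2 := by
    simp
  rw [e1, e2, e3] at key
  exact (le_abs_self _).trans key


lemma integral_Ioo_split {f : ℝ → H} (hf : Integrable f (volume.restrict (Ioo 0 T)))
    {s : ℝ} (hs : s ∈ Ioo 0 T) :
    ∫ t in Ioo s T, f t = (∫ t in Ioo 0 T, f t) - ∫ t in Ioo 0 s, f t := by
  have h1 : IntegrableOn f (Ioo 0 s) volume :=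
    MeasureTheory.IntegrableOn.mono_set hf (Ioo_subset_Ioo le_rfl hs.2.le)
  have h2 : IntegrableOn f (Ioo s T) volume :=
    MeasureTheory.IntegrableOn.mono_set hf (Ioo_subset_Ioo hs.1.le le_rfl)
  have hdisj : Disjoint (Ioo (0:ℝ) s) (Ioo s T) :=
    Set.disjoint_left.2 fun x hx hx' => absurd hx'.1 (not_lt.2 hx.2.le)
  have hunion : (∫ t in Ioo 0 s ∪ Ioo s T, f t) = (∫ t in Ioo 0 s, f t) + ∫ t in Ioo s T, f t :=
    setIntegral_union hdisj measurableSet_Ioo h1 h2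
  have hae : (Ioo (0:ℝ) s ∪ Ioo s T : Set ℝ) =ᵐ[volume] Ioo 0 T := by
    rw [MeasureTheory.ae_eq_set]
    constructor
    · refine measure_mono_null (fun x hx => (?_ : x ∈ (∅ : Set ℝ))) measure_empty
      rcases hx.1 with h | h
      · exact absurd ⟨h.1, h.2.trans hs.2⟩ hx.2
      · exact absurd ⟨hs.1.trans h.1, h.2⟩ hx.2
    · refine measure_mono_null (fun x hx => (?_ : x ∈ ({s} : Set ℝ))) Real.volume_singleton
      rcases lt_trichotomy x s with h | h | h
      · exact absurd (Or.inl ⟨hx.1.1, h⟩) hx.2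
      · exact h
      · exact absurd (Or.inr ⟨h, hx.1.2⟩) hx.2
  rw [← setIntegral_congr_set hae, hunion]
  abel

lemma fubini_inner (hT : 0 < T) {w f : ℝ → H}
    (hw : Integrable w (volume.restrict (Ioo 0 T)))
    (hf : Integrable f (volume.restrict (Ioo 0 T))) :
    (∫ t in Ioo 0 T, ⟪w t, ∫ s in Ioo 0 t, f s⟫) =
      ∫ s in Ioo 0 T, ⟪∫ t in Ioo s T, w t, f s⟫ ∧
    Integrable (fun s => ⟪∫ t in Ioo s T, w t, f s⟫) (volume.restrict (Ioo 0 T)) := by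
  set μ := volume.restrict (Ioo (0:ℝ) T) with hμ
  set K : ℝ × ℝ → ℝ := fun p => {q : ℝ × ℝ | q.2 < q.1}.indicator (fun q => ⟪w q.1, f q.2⟫) p
    with hK
  have hmeas : MeasurableSet {q : ℝ × ℝ | q.2 < q.1} :=
    measurableSet_lt measurable_snd measurable_fst
  have hKmeas : AEStronglyMeasurable K (μ.prod μ) := by
    refine AEStronglyMeasurable.indicator ?_ hmeas
    exact (hw.aestronglyMeasurable.comp_fst).inner (hf.aestronglyMeasurable.comp_snd)
  have hKint : Integrable K (μ.prod μ) := by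
    refine Integrable.mono' (hw.norm.mul_prod hf.norm) hKmeas
      (Eventually.of_forall fun p => ?_)
    simp only [hK, Set.indicator_apply, Set.mem_setOf_eq, Real.norm_eq_abs]
    split
    · exact (abs_real_inner_le_norm _ _)
    · simpa using mul_nonneg (norm_nonneg _) (norm_nonneg _)
  -- inner integral in s:
  have hin_t : ∀ᵐ t ∂μ, (∫ s, K (t, s) ∂μ) = ⟪w t, ∫ s in Ioo 0 t, f s⟫ := by
    filter_upwards [ae_restrict_mem measurableSet_Ioo] with t ht
    have h1 : ∀ s, K (t, s) = (Iio t).indicator (fun s => ⟪w t, f s⟫) s := fun s => by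
      simp only [hK, Set.indicator_apply, Set.mem_setOf_eq, Set.mem_Iio]
    simp_rw [h1]
    rw [integral_indicator measurableSet_Iio, hμ, Measure.restrict_restrict measurableSet_Iio]
    have hset : Iio t ∩ Ioo 0 T = Ioo 0 t := by
      ext x; constructor
      · rintro ⟨hx1, hx2, hx3⟩; exact ⟨hx2, hx1⟩
      · rintro ⟨hx1, hx2⟩; exact ⟨hx2, hx1, hx2.trans ht.2⟩
    rw [hset]
    exact integral_inner (MeasureTheory.IntegrableOn.mono_set hf
      (Ioo_subset_Ioo le_rfl ht.2.le)) (w t)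
  have hin_s : ∀ᵐ s ∂μ, (∫ t, K (t, s) ∂μ) = ⟪∫ t in Ioo s T, w t, f s⟫ := by
    filter_upwards [ae_restrict_mem measurableSet_Ioo] with s hs
    have h1 : ∀ t, K (t, s) = (Ioi s).indicator (fun t => ⟪w t, f s⟫) t := fun t => by
      simp only [hK, Set.indicator_apply, Set.mem_setOf_eq, Set.mem_Ioi]
    simp_rw [h1]
    rw [integral_indicator measurableSet_Ioi, hμ, Measure.restrict_restrict measurableSet_Ioi]
    have hset : Ioi s ∩ Ioo 0 T = Ioo s T := by
      ext x; constructor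
      · rintro ⟨hx1, hx2, hx3⟩; exact ⟨hx1, hx3⟩
      · rintro ⟨hx1, hx2⟩; exact ⟨hx1, hs.1.trans hx1, hx2⟩
    rw [hset]
    have : ∀ t, ⟪w t, f s⟫ = ⟪f s, w t⟫ := fun t => real_inner_comm _ _
    simp_rw [this]
    rw [integral_inner (MeasureTheory.IntegrableOn.mono_set hw
      (Ioo_subset_Ioo hs.1.le le_rfl)) (f s)]
    exact real_inner_comm _ _
  constructor
  · calc (∫ t in Ioo 0 T, ⟪w t, ∫ s in Ioo 0 t, f s⟫)
        = ∫ t, ∫ s, K (t, s) ∂μ ∂μ := (integral_congr_ae hin_t).symm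
      _ = ∫ s, ∫ t, K (t, s) ∂μ ∂μ := by
          exact MeasureTheory.integral_integral_swap hKint
      _ = ∫ s in Ioo 0 T, ⟪∫ t in Ioo s T, w t, f s⟫ := integral_congr_ae hin_s
  · exact (hKint.integral_prod_right).congr hin_s



lemma energy_nonneg (hT : 0 < T) (A : H →L[ℝ] H)
    (hAsym : ∀ x y : H, ⟪A x, y⟫ = ⟪x, A y⟫) (hA0 : ∀ h : H, 0 ≤ ⟪A h, h⟫)
    {f : ℝ → H} (hf : Integrable f (volume.restrict (Ioo 0 T))) :
    0 ≤ ∫ t in Ioo 0 T, ⟪A (f t), ∫ s in Ioo 0 t, f s⟫ := by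
  set μ := volume.restrict (Ioo (0:ℝ) T) with hμ
  have hw : Integrable (fun t => A (f t)) μ := A.integrable_comp hf
  obtain ⟨heq, hint⟩ := fubini_inner hT hw hf
  set R : ℝ → H := fun x => ∫ s in Ioo 0 x, f s with hR
  set E : ℝ := ∫ t in Ioo 0 T, ⟪A (f t), R t⟫ with hE
  have hAR : ∀ x ∈ Icc (0:ℝ) T, (∫ t in Ioo 0 x, A (f t)) = A (R x) := by
    intro x hx
    rw [hR]
    exact (A.integral_comp_comm (MeasureTheory.IntegrableOn.mono_set hf
      (Ioo_subset_Ioo le_rfl hx.2)))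
  have hcongr : ∀ᵐ s ∂μ,
      ⟪∫ t in Ioo s T, A (f t), f s⟫ = ⟪A (R T), f s⟫ - ⟪A (f s), R s⟫ := by
    filter_upwards [ae_restrict_mem measurableSet_Ioo] with s hs
    rw [integral_Ioo_split hw hs, hAR T ⟨le_rfl.trans hT.le, le_rfl⟩,
      hAR s ⟨hs.1.le, hs.2.le⟩, inner_sub_left]
    congr 1
    rw [hAsym, real_inner_comm]
  have hterm1 : Integrable (fun s => ⟪A (R T), f s⟫) μ := hf.const_inner _
  have hterm2 : Integrable (fun s => ⟪A (f s), R s⟫) μ := by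
    refine (hterm1.sub hint).congr ?_
    filter_upwards [hcongr] with s hcs
    simp only [Pi.sub_apply, hcs]; ring
  have hC : (∫ s in Ioo 0 T, ⟪A (R T), f s⟫) = ⟪A (R T), R T⟫ := integral_inner hf _
  have hkey : E = ⟪A (R T), R T⟫ - E := by
    calc E = ∫ s in Ioo 0 T, ⟪∫ t in Ioo s T, A (f t), f s⟫ := heq
      _ = ∫ s in Ioo 0 T, (⟪A (R T), f s⟫ - ⟪A (f s), R s⟫) := integral_congr_ae hcongr
      _ = (∫ s in Ioo 0 T, ⟪A (R T), f s⟫) - ∫ s in Ioo 0 T, ⟪A (f s), R s⟫ :=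
          integral_sub hterm1 hterm2
      _ = ⟪A (R T), R T⟫ - E := by rw [hC]
  have := hA0 (R T)
  have hE2 : E = ⟪A (R T), R T⟫ / 2 := by linarith
  rw [hE2] at *
  linarith

end RSWC


/-- Weak closedness of reduced solutions of the quasi-static evolution variational
inequality: if `gₙ → g` strongly in `L²(0,T;H)`, the derivatives `σₙ'` converge
weakly in `L²(0,T;H)` to `v`, all `σₙ` start at `σ₀` and solve the time-integrated
variational inequality, then `σ(t) := σ₀ + ∫₀ᵗ v` solves it as well. -/
theorem reduced_solution_weakly_closed
    {H : Type*} [NormedAddCommGroup H] [InnerProductSpace ℝ H] [CompleteSpace H]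
    (𝒞 : Set H) (h𝒞 : 𝒞.Nonempty) (h𝒞closed : IsClosed 𝒞) (h𝒞conv : Convex ℝ 𝒞)
    (A : H →L[ℝ] H) (hAsym : ∀ x y, ⟪A x, y⟫ = ⟪x, A y⟫)
    (γ : ℝ) (hγ : 0 < γ) (hAcoer : ∀ h : H, γ * ‖h‖ ^ 2 ≤ ⟪A h, h⟫)
    (T : ℝ) (hT : 0 < T) (σ₀ : H)
    (g : ℕ → ℝ → H) (glim : ℝ → H)
    (hg : ∀ n, MemLp (g n) 2 (volume.restrict (Set.Ioo 0 T)))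
    (hglim : MemLp glim 2 (volume.restrict (Set.Ioo 0 T)))
    (hgstrong : Filter.Tendsto (fun n => ∫ t in (0:ℝ)..T, ‖g n t - glim t‖ ^ 2)
      Filter.atTop (nhds 0))
    (σ σ' : ℕ → ℝ → H) (v : ℝ → H)
    (hσ : ∀ n, IsH1Curve T (σ n) (σ' n)) (hinit : ∀ n, σ n 0 = σ₀)
    (hv : MemLp v 2 (volume.restrict (Set.Ioo 0 T)))
    (hweak : ∀ h : ℝ → H, MemLp h 2 (volume.restrict (Set.Ioo 0 T)) →
      Filter.Tendsto (fun n => ∫ t in (0:ℝ)..T, ⟪σ' n t, h t⟫) Filter.atTop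
        (nhds (∫ t in (0:ℝ)..T, ⟪v t, h t⟫)))
    (hfeas : ∀ n, ∀ᵐ t ∂(volume.restrict (Set.Ioo 0 T)), σ n t ∈ 𝒞)
    (hvi : ∀ n, ∀ τ : ℝ → H, MemLp τ 2 (volume.restrict (Set.Ioo 0 T)) →
      (∀ᵐ t ∂(volume.restrict (Set.Ioo 0 T)), τ t ∈ 𝒞) →
      0 ≤ ∫ t in (0:ℝ)..T, ⟪A (σ' n t) - g n t, τ t - σ n t⟫) :
    (∀ᵐ t ∂(volume.restrict (Set.Ioo 0 T)),
        σ₀ + (∫ s in (0:ℝ)..t, v s) ∈ 𝒞) ∧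
      ∀ τ : ℝ → H, MemLp τ 2 (volume.restrict (Set.Ioo 0 T)) →
        (∀ᵐ t ∂(volume.restrict (Set.Ioo 0 T)), τ t ∈ 𝒞) →
        0 ≤ ∫ t in (0:ℝ)..T,
          ⟪A (v t) - glim t, τ t - (σ₀ + ∫ s in (0:ℝ)..t, v s)⟫ := by
  classical
  set μ := volume.restrict (Set.Ioo (0:ℝ) T) with hμdef
  -- basic integrability
  have hσ'L2 : ∀ n, MemLp (σ' n) 2 μ := fun n => (hσ n).1
  have hσ'int : ∀ n, Integrable (σ' n) μ := fun n => (hσ'L2 n).integrable one_le_two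
  have hvint : Integrable v μ := hv.integrable one_le_two
  -- converted weak convergence
  have hweak' : ∀ h : ℝ → H, MemLp h 2 μ →
      Filter.Tendsto (fun n => ∫ t in Set.Ioo (0:ℝ) T, ⟪σ' n t, h t⟫) Filter.atTop
        (nhds (∫ t in Set.Ioo (0:ℝ) T, ⟪v t, h t⟫)) := by
    intro h hh
    have := hweak h hh
    simpa only [RSWC.ii_eq_Ioo _ hT.le] using this
  -- the continuous representative of the limit curve
  set σc : ℝ → H := fun t => σ₀ + ∫ s in (0:ℝ)..t, (Set.Ioo 0 T).indicator v s with hσcdef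
  have hσc_cont : Continuous σc :=
    continuous_const.add (RSWC.continuous_primitive_indicator hvint)
  have hσcL2 : MemLp σc 2 μ := RSWC.memℒp_of_continuous hσc_cont
  have hσc_eq : ∀ t ∈ Set.Icc (0:ℝ) T, σc t = σ₀ + ∫ s in (0:ℝ)..t, v s := by
    intro t ht
    rw [hσcdef]
    simp only [RSWC.primitive_indicator_eq ht]
  -- key computation for pointwise weak convergence
  have key : ∀ (f : ℝ → H), Integrable f μ → ∀ t ∈ Set.Icc (0:ℝ) T, ∀ y : H,
      (∫ s in (0:ℝ)..T, ⟪f s, (Set.Ioc 0 t).indicator (fun _ => y) s⟫) =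
        ⟪∫ s in (0:ℝ)..t, f s, y⟫ := by
    intro f hf t ht y
    have hfIoc : IntegrableOn f (Set.Ioc 0 t) volume :=
      (intervalIntegrable_iff_integrableOn_Ioc_of_le ht.1).1 (RSWC.intervalIntegrable_of hf ht)
    rw [intervalIntegral.integral_of_le hT.le]
    have hpt : ∀ s, ⟪f s, (Set.Ioc 0 t).indicator (fun _ => y) s⟫ =
        (Set.Ioc 0 t).indicator (fun s => ⟪f s, y⟫) s := fun s => by
      simp only [Set.indicator_apply]; split <;> simp
    simp_rw [hpt]
    rw [integral_indicator measurableSet_Ioc, Measure.restrict_restrict measurableSet_Ioc,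
      Set.inter_eq_left.2 (Set.Ioc_subset_Ioc le_rfl ht.2)]
    have hcomm : ∀ s, ⟪f s, y⟫ = ⟪y, f s⟫ := fun s => real_inner_comm _ _
    simp_rw [hcomm]
    rw [integral_inner hfIoc y, ← intervalIntegral.integral_of_le ht.1]
    exact real_inner_comm _ _
  -- pointwise weak convergence of the curves
  have hptwise : ∀ t ∈ Set.Icc (0:ℝ) T, ∀ y : H,
      Filter.Tendsto (fun n => ⟪σ n t, y⟫) Filter.atTop
        (nhds ⟪σ₀ + ∫ s in (0:ℝ)..t, v s, y⟫) := by
    intro t ht y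
    have hh : MemLp ((Set.Ioc 0 t).indicator (fun _ => y)) 2 μ :=
      (memLp_const y).indicator measurableSet_Ioc
    have h1 := hweak _ hh
    rw [key v hvint t ht y] at h1
    have h2 : ∀ n, (∫ s in (0:ℝ)..T, ⟪σ' n s, (Set.Ioc 0 t).indicator (fun _ => y) s⟫) =
        ⟪σ n t, y⟫ - ⟪σ₀, y⟫ := by
      intro n
      rw [key (σ' n) (hσ'int n) t ht y]
      have h3 := (hσ n).2 t ht
      rw [hinit n] at h3
      have h4 : (∫ s in (0:ℝ)..t, σ' n s) = σ n t - σ₀ := by rw [h3]; abel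
      rw [h4, inner_sub_left]
    simp_rw [h2] at h1
    have h5 := h1.add_const ⟪σ₀, y⟫
    simp only [sub_add_cancel] at h5
    convert h5 using 2
    rw [inner_add_left]
    ring
  refine ⟨?_, ?_⟩
  · -- feasibility
    filter_upwards [ae_restrict_mem measurableSet_Ioo, MeasureTheory.ae_all_iff.2 hfeas]
      with t ht hmem
    by_contra hx
    obtain ⟨φ, u, hu1, hu2⟩ := geometric_hahn_banach_point_closed h𝒞conv h𝒞closed hx
    set y := (InnerProductSpace.toDual ℝ H).symm φ with hy
    have hφ : ∀ z : H, ⟪y, z⟫ = φ z := fun z => InnerProductSpace.toDual_symm_apply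
    have htd := hptwise t (Set.mem_Icc_of_Ioo ht) y
    have hφ' : ∀ z : H, φ z = ⟪z, y⟫ := fun z => by rw [← hφ, real_inner_comm]
    have htd2 : Filter.Tendsto (fun n => φ (σ n t)) Filter.atTop
        (nhds (φ (σ₀ + ∫ s in (0:ℝ)..t, v s))) := by
      simpa only [hφ'] using htd
    have : u ≤ φ (σ₀ + ∫ s in (0:ℝ)..t, v s) :=
      ge_of_tendsto htd2 (Filter.Eventually.of_forall fun n => (hu2 _ (hmem n)).le)
    exact absurd hu1 (not_lt.2 this)
  · -- variational inequality
    intro τ hτ hτC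
    set w : ℝ → H := fun t => A (v t) - glim t with hwdef
    have hAv : MemLp (fun t => A (v t)) 2 μ := A.comp_memLp' hv
    have hwL2 : MemLp w 2 μ := hAv.sub hglim
    have hwint : Integrable w μ := hwL2.integrable one_le_two
    have hτσc : MemLp (fun t => τ t - σc t) 2 μ := hτ.sub hσcL2
    set ρ' : ℕ → ℝ → H := fun n t => σ' n t - v t with hρ'def
    have hρ'L2 : ∀ n, MemLp (ρ' n) 2 μ := fun n => (hσ'L2 n).sub hv
    have hρ'int : ∀ n, Integrable (ρ' n) μ := fun n => (hρ'L2 n).integrable one_le_two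
    set ρc : ℕ → ℝ → H := fun n t => ∫ s in (0:ℝ)..t, (Set.Ioo 0 T).indicator (ρ' n) s
      with hρcdef
    have hρc_cont : ∀ n, Continuous (ρc n) := fun n =>
      RSWC.continuous_primitive_indicator (hρ'int n)
    have hρcL2 : ∀ n, MemLp (ρc n) 2 μ := fun n => RSWC.memℒp_of_continuous (hρc_cont n)
    have hρc_eq : ∀ n, ∀ t ∈ Set.Icc (0:ℝ) T, ρc n t = σ n t - σc t := by
      intro n t ht
      have h1 : ρc n t = ∫ s in (0:ℝ)..t, ρ' n s := RSWC.primitive_indicator_eq ht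
      have h2 : (∫ s in (0:ℝ)..t, ρ' n s) =
          (∫ s in (0:ℝ)..t, σ' n s) - ∫ s in (0:ℝ)..t, v s :=
        intervalIntegral.integral_sub (RSWC.intervalIntegrable_of (hσ'int n) ht)
          (RSWC.intervalIntegrable_of hvint ht)
      have h3 := (hσ n).2 t ht
      rw [hinit n] at h3
      rw [h1, h2, h3, hσc_eq t ht]
      abel
    have hρc_Ioo : ∀ n, ∀ t ∈ Set.Ioo (0:ℝ) T, ρc n t = ∫ s in Set.Ioo 0 t, ρ' n s := by
      intro n t ht
      rw [hρcdef]
      simp only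
      rw [RSWC.primitive_indicator_eq (Set.mem_Icc_of_Ioo ht), RSWC.ii_eq_Ioo _ ht.1.le]
    -- Banach–Steinhaus: uniform bound on ρ' n in L²
    obtain ⟨M, hM0, hMbound⟩ : ∃ M : ℝ, 0 ≤ M ∧
        ∀ n, Real.sqrt (∫ t in Set.Ioo (0:ℝ) T, ‖ρ' n t‖ ^ 2) ≤ M := by
      set Φ : ℕ → (Lp H 2 μ) →L[ℝ] ℝ := fun n => innerSL ℝ ((hρ'L2 n).toLp (ρ' n)) with hΦ
      have hpt : ∀ x : Lp H 2 μ, ∃ C, ∀ n, ‖Φ n x‖ ≤ C := by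
        intro x
        have hx2 : MemLp (⇑x) 2 μ := Lp.memLp x
        have hval : ∀ n, Φ n x = (∫ t in Set.Ioo (0:ℝ) T, ⟪σ' n t, x t⟫) -
            ∫ t in Set.Ioo (0:ℝ) T, ⟪v t, x t⟫ := by
          intro n
          have e0 : Φ n x = ⟪(hρ'L2 n).toLp (ρ' n), hx2.toLp ⇑x⟫ := by
            rw [hΦ]
            simp only [innerSL_apply_apply]
            congr 1
            exact (MeasureTheory.Lp.toLp_coeFn x hx2).symm
          rw [e0, ← RSWC.integral_inner_eq_inner_toLp (hρ'L2 n) hx2,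
            ← integral_sub (RSWC.integrable_inner_of_memℒp (hσ'L2 n) hx2)
              (RSWC.integrable_inner_of_memℒp hv hx2)]
          refine integral_congr_ae (Filter.Eventually.of_forall fun t => ?_)
          simp [hρ'def, inner_sub_left]
        have h0 := (hweak' (⇑x) hx2).sub_const (∫ t in Set.Ioo (0:ℝ) T, ⟪v t, x t⟫)
        rw [sub_self] at h0
        have h1 : Filter.Tendsto (fun n => Φ n x) Filter.atTop (nhds 0) :=
          Filter.Tendsto.congr (fun n => (hval n).symm) h0
        obtain ⟨C, hC⟩ := (h1.norm).bddAbove_range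
        exact ⟨C, fun n => hC ⟨n, rfl⟩⟩
      obtain ⟨C, hC⟩ := banach_steinhaus hpt
      refine ⟨max C 0, le_max_right _ _, fun n => ?_⟩
      have h1 : ‖Φ n‖ = ‖(hρ'L2 n).toLp (ρ' n)‖ := by
        simp only [hΦ]
        exact innerSL_apply_norm (𝕜 := ℝ) _
      rw [← RSWC.norm_toLp_sq (hρ'L2 n), Real.sqrt_sq (norm_nonneg _), ← h1]
      exact le_trans (hC n) (le_max_left _ _)
    have hρc_bd : ∀ n, ∀ t ∈ Set.Ioo (0:ℝ) T, ‖ρc n t‖ ≤ Real.sqrt T * M := by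
      intro n t ht
      calc ‖ρc n t‖ ≤ ∫ s in Set.Ioo 0 T, ‖ρ' n s‖ :=
            RSWC.primitive_norm_le (hρ'int n) (Set.mem_Icc_of_Ioo ht)
        _ ≤ Real.sqrt T * Real.sqrt (∫ s in Set.Ioo (0:ℝ) T, ‖ρ' n s‖ ^ 2) :=
            RSWC.integral_norm_le_sqrt hT (hρ'L2 n)
        _ ≤ Real.sqrt T * M := by
            exact mul_le_mul_of_nonneg_left (hMbound n) (Real.sqrt_nonneg T)
    -- integrability of the six pieces
    have hAρ'L2 : ∀ n, MemLp (fun t => A (ρ' n t)) 2 μ := fun n => A.comp_memLp' (hρ'L2 n)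
    have hgdL2 : ∀ n, MemLp (fun t => glim t - g n t) 2 μ := fun n => hglim.sub (hg n)
    have hInt1 : Integrable (fun t => ⟪w t, τ t - σc t⟫) μ :=
      RSWC.integrable_inner_of_memℒp hwL2 hτσc
    have hInt2 : ∀ n, Integrable (fun t => ⟪A (ρ' n t), τ t - σc t⟫) μ := fun n =>
      RSWC.integrable_inner_of_memℒp (hAρ'L2 n) hτσc
    have hInt3 : ∀ n, Integrable (fun t => ⟪glim t - g n t, τ t - σc t⟫) μ := fun n =>
      RSWC.integrable_inner_of_memℒp (hgdL2 n) hτσc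
    have hInt4 : ∀ n, Integrable (fun t => ⟪w t, ρc n t⟫) μ := fun n =>
      RSWC.integrable_inner_of_memℒp hwL2 (hρcL2 n)
    have hInt5 : ∀ n, Integrable (fun t => ⟪A (ρ' n t), ρc n t⟫) μ := fun n =>
      RSWC.integrable_inner_of_memℒp (hAρ'L2 n) (hρcL2 n)
    have hInt6 : ∀ n, Integrable (fun t => ⟪glim t - g n t, ρc n t⟫) μ := fun n =>
      RSWC.integrable_inner_of_memℒp (hgdL2 n) (hρcL2 n)
    set I : ℝ := ∫ t in Set.Ioo (0:ℝ) T, ⟪w t, τ t - σc t⟫ with hIdef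
    -- splitting of the variational inequality
    have hsplit : ∀ n, (∫ t in Set.Ioo (0:ℝ) T, ⟪A (σ' n t) - g n t, τ t - σ n t⟫) =
        I + (∫ t in Set.Ioo (0:ℝ) T, ⟪A (ρ' n t), τ t - σc t⟫)
          + (∫ t in Set.Ioo (0:ℝ) T, ⟪glim t - g n t, τ t - σc t⟫)
          - (∫ t in Set.Ioo (0:ℝ) T, ⟪w t, ρc n t⟫)
          - (∫ t in Set.Ioo (0:ℝ) T, ⟪A (ρ' n t), ρc n t⟫)
          - (∫ t in Set.Ioo (0:ℝ) T, ⟪glim t - g n t, ρc n t⟫) := by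
      intro n
      have hptw : ∀ᵐ t ∂μ, ⟪A (σ' n t) - g n t, τ t - σ n t⟫ =
          ⟪w t, τ t - σc t⟫ + ⟪A (ρ' n t), τ t - σc t⟫ + ⟪glim t - g n t, τ t - σc t⟫
          - ⟪w t, ρc n t⟫ - ⟪A (ρ' n t), ρc n t⟫ - ⟪glim t - g n t, ρc n t⟫ := by
        filter_upwards [ae_restrict_mem measurableSet_Ioo] with t ht
        have h5 : σ n t = σc t + ρc n t := by
          rw [hρc_eq n t (Set.mem_Icc_of_Ioo ht)]; abel
        have h6 : A (σ' n t) = A (v t) + A (ρ' n t) := by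
          rw [← map_add]; congr 1; simp [hρ'def]
        rw [h5, h6, hwdef]
        simp only [inner_sub_left, inner_sub_right, inner_add_left, inner_add_right]
        ring
      have i12 : Integrable (fun t => ⟪w t, τ t - σc t⟫ + ⟪A (ρ' n t), τ t - σc t⟫) μ :=
        hInt1.add (hInt2 n)
      have i123 : Integrable (fun t => ⟪w t, τ t - σc t⟫ + ⟪A (ρ' n t), τ t - σc t⟫
          + ⟪glim t - g n t, τ t - σc t⟫) μ := i12.add (hInt3 n)
      have i1234 : Integrable (fun t => ⟪w t, τ t - σc t⟫ + ⟪A (ρ' n t), τ t - σc t⟫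
          + ⟪glim t - g n t, τ t - σc t⟫ - ⟪w t, ρc n t⟫) μ := i123.sub (hInt4 n)
      have i12345 : Integrable (fun t => ⟪w t, τ t - σc t⟫ + ⟪A (ρ' n t), τ t - σc t⟫
          + ⟪glim t - g n t, τ t - σc t⟫ - ⟪w t, ρc n t⟫ - ⟪A (ρ' n t), ρc n t⟫) μ :=
        i1234.sub (hInt5 n)
      rw [integral_congr_ae hptw, integral_sub i12345 (hInt6 n),
        integral_sub i1234 (hInt5 n), integral_sub i123 (hInt4 n),
        integral_add i12 (hInt3 n), integral_add hInt1 (hInt2 n)]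
    -- nonnegativity of the energy term
    have hT5 : ∀ n, 0 ≤ ∫ t in Set.Ioo (0:ℝ) T, ⟪A (ρ' n t), ρc n t⟫ := by
      intro n
      have hce : ∀ᵐ t ∂μ, ⟪A (ρ' n t), ρc n t⟫ =
          ⟪A (ρ' n t), ∫ s in Set.Ioo 0 t, ρ' n s⟫ := by
        filter_upwards [ae_restrict_mem measurableSet_Ioo] with t ht
        rw [hρc_Ioo n t ht]
      rw [integral_congr_ae hce]
      exact RSWC.energy_nonneg hT A hAsym
        (fun h => le_trans (by positivity) (hAcoer h)) (hρ'int n)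
    -- the inequality for each n
    have hineq : ∀ n,
        (∫ t in Set.Ioo (0:ℝ) T, ⟪w t, ρc n t⟫)
          + (∫ t in Set.Ioo (0:ℝ) T, ⟪glim t - g n t, ρc n t⟫)
          - (∫ t in Set.Ioo (0:ℝ) T, ⟪A (ρ' n t), τ t - σc t⟫)
          - (∫ t in Set.Ioo (0:ℝ) T, ⟪glim t - g n t, τ t - σc t⟫) ≤ I := by
      intro n
      have h0 := hvi n τ hτ hτC
      rw [RSWC.ii_eq_Ioo _ hT.le, hsplit n] at h0
      have := hT5 n
      linarith
    -- limit of the first term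
    have hlim1 : Filter.Tendsto
        (fun n => ∫ t in Set.Ioo (0:ℝ) T, ⟪A (ρ' n t), τ t - σc t⟫)
        Filter.atTop (nhds 0) := by
      set h₁ : ℝ → H := fun t => A (τ t - σc t) with hh₁def
      have hh₁ : MemLp h₁ 2 μ := A.comp_memLp' hτσc
      have heq : ∀ n, (∫ t in Set.Ioo (0:ℝ) T, ⟪A (ρ' n t), τ t - σc t⟫) =
          (∫ t in Set.Ioo (0:ℝ) T, ⟪σ' n t, h₁ t⟫) -
            ∫ t in Set.Ioo (0:ℝ) T, ⟪v t, h₁ t⟫ := by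
        intro n
        rw [← integral_sub (RSWC.integrable_inner_of_memℒp (hσ'L2 n) hh₁)
          (RSWC.integrable_inner_of_memℒp hv hh₁)]
        refine integral_congr_ae (Filter.Eventually.of_forall fun t => ?_)
        simp only [hρ'def, hh₁def]
        rw [hAsym, inner_sub_left]
      have h0 := (hweak' h₁ hh₁).sub_const (∫ t in Set.Ioo (0:ℝ) T, ⟪v t, h₁ t⟫)
      rw [sub_self] at h0
      exact Filter.Tendsto.congr (fun n => (heq n).symm) h0
    -- limit of the w-term (via Fubini)
    have hlim4 : Filter.Tendsto
        (fun n => ∫ t in Set.Ioo (0:ℝ) T, ⟪w t, ρc n t⟫) Filter.atTop (nhds 0) := by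
      set Wc : ℝ → H := fun s =>
        (∫ t in Set.Ioo (0:ℝ) T, w t) - ∫ r in (0:ℝ)..s, (Set.Ioo 0 T).indicator w r
        with hWcdef
      have hWc_cont : Continuous Wc :=
        continuous_const.sub (RSWC.continuous_primitive_indicator hwint)
      have hWcL2 : MemLp Wc 2 μ := RSWC.memℒp_of_continuous hWc_cont
      have hWc_eq : ∀ s ∈ Set.Ioo (0:ℝ) T, Wc s = ∫ t in Set.Ioo s T, w t := by
        intro s hs
        rw [RSWC.integral_Ioo_split hwint hs, hWcdef]
        simp only
        rw [RSWC.primitive_indicator_eq (Set.mem_Icc_of_Ioo hs), RSWC.ii_eq_Ioo _ hs.1.le]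
      have heq : ∀ n, (∫ t in Set.Ioo (0:ℝ) T, ⟪w t, ρc n t⟫) =
          (∫ s in Set.Ioo (0:ℝ) T, ⟪σ' n s, Wc s⟫) -
            ∫ s in Set.Ioo (0:ℝ) T, ⟪v s, Wc s⟫ := by
        intro n
        have e1 : (∫ t in Set.Ioo (0:ℝ) T, ⟪w t, ρc n t⟫) =
            ∫ t in Set.Ioo (0:ℝ) T, ⟪w t, ∫ s in Set.Ioo 0 t, ρ' n s⟫ := by
          refine integral_congr_ae ?_
          filter_upwards [ae_restrict_mem measurableSet_Ioo] with t ht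
          rw [hρc_Ioo n t ht]
        have e2 := (RSWC.fubini_inner hT hwint (hρ'int n)).1
        have e3 : (∫ s in Set.Ioo (0:ℝ) T, ⟪∫ t in Set.Ioo s T, w t, ρ' n s⟫) =
            ∫ s in Set.Ioo (0:ℝ) T, ⟪ρ' n s, Wc s⟫ := by
          refine integral_congr_ae ?_
          filter_upwards [ae_restrict_mem measurableSet_Ioo] with s hs
          rw [← hWc_eq s hs, real_inner_comm]
        have e4 : (∫ s in Set.Ioo (0:ℝ) T, ⟪ρ' n s, Wc s⟫) =
            (∫ s in Set.Ioo (0:ℝ) T, ⟪σ' n s, Wc s⟫) -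
              ∫ s in Set.Ioo (0:ℝ) T, ⟪v s, Wc s⟫ := by
          rw [← integral_sub (RSWC.integrable_inner_of_memℒp (hσ'L2 n) hWcL2)
            (RSWC.integrable_inner_of_memℒp hv hWcL2)]
          refine integral_congr_ae (Filter.Eventually.of_forall fun s => ?_)
          simp [hρ'def, inner_sub_left]
        rw [e1, e2, e3, e4]
      have h0 := (hweak' Wc hWcL2).sub_const (∫ s in Set.Ioo (0:ℝ) T, ⟪v s, Wc s⟫)
      rw [sub_self] at h0
      exact Filter.Tendsto.congr (fun n => (heq n).symm) h0
    -- strong convergence of g n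
    have hQ : Filter.Tendsto (fun n => ∫ t in Set.Ioo (0:ℝ) T, ‖glim t - g n t‖ ^ 2)
        Filter.atTop (nhds 0) := by
      have h := hgstrong
      simp_rw [RSWC.ii_eq_Ioo _ hT.le] at h
      refine h.congr fun n => ?_
      refine integral_congr_ae (Filter.Eventually.of_forall fun t => ?_)
      show ‖g n t - glim t‖ ^ 2 = ‖glim t - g n t‖ ^ 2
      rw [norm_sub_rev]
    have hsq : Filter.Tendsto
        (fun n => Real.sqrt (∫ t in Set.Ioo (0:ℝ) T, ‖glim t - g n t‖ ^ 2))
        Filter.atTop (nhds 0) := by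
      simpa using hQ.sqrt
    -- limit of the two g-terms
    have hlim3 : Filter.Tendsto
        (fun n => ∫ t in Set.Ioo (0:ℝ) T, ⟪glim t - g n t, τ t - σc t⟫)
        Filter.atTop (nhds 0) := by
      have hb := hsq.mul_const (Real.sqrt (∫ t in Set.Ioo (0:ℝ) T, ‖τ t - σc t‖ ^ 2))
      rw [zero_mul] at hb
      refine squeeze_zero_norm (fun n => ?_) hb
      rw [Real.norm_eq_abs]
      exact RSWC.abs_integral_inner_le (hgdL2 n) hτσc
    -- limit of the last g-term
    have hlim6 : Filter.Tendsto
        (fun n => ∫ t in Set.Ioo (0:ℝ) T, ⟪glim t - g n t, ρc n t⟫)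
        Filter.atTop (nhds 0) := by
      have hb := (hsq.const_mul (Real.sqrt T)).mul_const (Real.sqrt T * M)
      rw [mul_zero, zero_mul] at hb
      refine squeeze_zero_norm (fun n => ?_) hb
      calc ‖∫ t in Set.Ioo (0:ℝ) T, ⟪glim t - g n t, ρc n t⟫‖
          ≤ ∫ t in Set.Ioo (0:ℝ) T, ‖⟪glim t - g n t, ρc n t⟫‖ :=
            norm_integral_le_integral_norm _
        _ ≤ ∫ t in Set.Ioo (0:ℝ) T, ‖glim t - g n t‖ * (Real.sqrt T * M) := by
            refine integral_mono_ae ((hInt6 n).norm)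
              ((((hgdL2 n).integrable one_le_two).norm).mul_const _) ?_
            filter_upwards [ae_restrict_mem measurableSet_Ioo] with t ht
            calc ‖⟪glim t - g n t, ρc n t⟫‖ ≤ ‖glim t - g n t‖ * ‖ρc n t‖ := by
                  rw [Real.norm_eq_abs]; exact abs_real_inner_le_norm _ _
              _ ≤ ‖glim t - g n t‖ * (Real.sqrt T * M) :=
                  mul_le_mul_of_nonneg_left (hρc_bd n t ht) (norm_nonneg _)
        _ = (∫ t in Set.Ioo (0:ℝ) T, ‖glim t - g n t‖) * (Real.sqrt T * M) :=
            integral_mul_const _ _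
        _ ≤ (Real.sqrt T * Real.sqrt (∫ t in Set.Ioo (0:ℝ) T, ‖glim t - g n t‖ ^ 2)) *
              (Real.sqrt T * M) := by
            refine mul_le_mul_of_nonneg_right (RSWC.integral_norm_le_sqrt hT (hgdL2 n)) ?_
            positivity
    -- assemble all the limits
    have hcomb : Filter.Tendsto (fun n =>
        (∫ t in Set.Ioo (0:ℝ) T, ⟪w t, ρc n t⟫)
          + (∫ t in Set.Ioo (0:ℝ) T, ⟪glim t - g n t, ρc n t⟫)
          - (∫ t in Set.Ioo (0:ℝ) T, ⟪A (ρ' n t), τ t - σc t⟫)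
          - (∫ t in Set.Ioo (0:ℝ) T, ⟪glim t - g n t, τ t - σc t⟫))
        Filter.atTop (nhds 0) := by
      have h := ((hlim4.add hlim6).sub hlim1).sub hlim3
      simpa using h
    have hI : 0 ≤ I := le_of_tendsto hcomb (Filter.Eventually.of_forall hineq)
    rw [RSWC.ii_eq_Ioo _ hT.le]
    have hfin : (∫ t in Set.Ioo (0:ℝ) T,
        ⟪w t, τ t - (σ₀ + ∫ s in (0:ℝ)..t, v s)⟫) = I := by
      refine integral_congr_ae ?_
      filter_upwards [ae_restrict_mem measurableSet_Ioo] with t ht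
      rw [← hσc_eq t (Set.mem_Icc_of_Ioo ht)]
    rw [hfin]
    exact hI
end

section
/- Let X be a real normed space, A ⊆ X a convex set, and δ > 0 such that the closed ball of radius δ around 0 is contained in A. Let ε ∈ (0,1), a ∈ A, and w ∈ X with ‖w − (1−ε)a‖ ≤ εδ/2. Then (1 − ε/2)⁻¹ w ∈ A. -/
/-- Pointwise step of the appendix density lemma: if the closed ball of radius `δ`
around `0` is contained in the convex set `A`, `ε ∈ (0,1)`, `a ∈ A`, and
`‖w − (1−ε)a‖ ≤ εδ/2`, then `(1 − ε/2)⁻¹ w ∈ A`. -/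
theorem shrunken_approximant_mem_convex
    {X : Type*} [NormedAddCommGroup X] [NormedSpace ℝ X]
    (A : Set X) (hAconv : Convex ℝ A)
    (δ : ℝ) (hδ : 0 < δ) (hball : Metric.closedBall (0 : X) δ ⊆ A)
    (ε : ℝ) (hε0 : 0 < ε) (hε1 : ε < 1)
    (a : X) (ha : a ∈ A)
    (w : X) (hw : ‖w - (1 - ε) • a‖ ≤ ε * δ / 2) :
    (1 - ε / 2)⁻¹ • w ∈ A := by
  have hεne : ε ≠ 0 := ne_of_gt hε0
  have hden : (0 : ℝ) < 1 - ε / 2 := by linarith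
  set u : X := w - (1 - ε) • a with hu
  set b : X := (2 / ε) • u with hb
  have hbA : b ∈ A := by
    apply hball
    rw [Metric.mem_closedBall, dist_zero_right, hb, norm_smul, Real.norm_eq_abs,
      abs_of_pos (by positivity : (0:ℝ) < 2 / ε)]
    calc 2 / ε * ‖u‖ ≤ 2 / ε * (ε * δ / 2) := by
          apply mul_le_mul_of_nonneg_left hw (by positivity)
      _ = δ := by field_simp
  have key : (1 - ε / 2)⁻¹ • w
      = ((1 - ε) / (1 - ε / 2)) • a + (ε / 2 / (1 - ε / 2)) • b := by
    have hwu : w = (1 - ε) • a + u := by rw [hu]; abel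
    rw [hwu, hb, smul_add, smul_smul, smul_smul]
    congr 1
    · congr 1; field_simp
    · congr 1
      rw [div_div, div_mul_div_comm, inv_eq_one_div,
        div_eq_div_iff (ne_of_gt hden) (by positivity)]
      ring
  rw [key]
  exact hAconv ha hbA (by apply div_nonneg <;> linarith) (by positivity)
    (by rw [← add_div, div_eq_one_iff_eq (ne_of_gt hden)]; ring)
end
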